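/- arXiv:0806.1236 — 2 statements merged into one kernel-verified Lean document; each statement's English description precedes it below -/
import Mathlib

section
/- Fix relatively prime positive integers p and q and ρ > 0, and let m : ℕ → ℕ be a sequence with (m(n) − (p/q)·n)/√n → ρ as n → ∞. Then there exists C > 0 such that for all sufficiently large n, on the torus T = (ZMod n) × (ZMod m(n)), the probability that N_{(p,q)}(ω) > C·n^{1/2} is at most exp(−C^{−1}·n^{1/2}). -/
open Function Filter

/-- The discrete torus `Z_n × Z_m`. -/
abbrev Torus (n m : ℕ) := ZMod n × ZMod m

/-- The quenched random walk determined by a configuration `ω`: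
`φ_ω(x,y) = (x+1,y)` if `ω(x,y) = true` and `(x,y+1)` otherwise. -/
def step {n m : ℕ} (ω : Torus n m → Bool) (z : Torus n m) : Torus n m :=
  if ω z then (z.1 + 1, z.2) else (z.1, z.2 + 1)

/-- The set of cycles of `step ω`: the orbits of its periodic points. -/
def cycles {n m : ℕ} (ω : Torus n m → Bool) : Set (Set (Torus n m)) :=
  {C | ∃ z ∈ periodicPts (step ω), C = {w | ∃ i : ℕ, (step ω)^[i] z = w}}

/-- `N(ω)`: the total number of distinct cycles of `step ω`. -/
noncomputable def numCycles {n m : ℕ} (ω : Torus n m → Bool) : ℕ :=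
  (cycles ω).ncard

/-- A cycle `C` has homology class `(p, q)`: it contains `n·p` points where `ω` is
`true` (horizontal steps) and `m·q` points where `ω` is `false` (vertical steps). -/
def HasHomology {n m : ℕ} (ω : Torus n m → Bool) (C : Set (Torus n m)) (p q : ℕ) : Prop :=
  {z ∈ C | ω z = true}.ncard = n * p ∧ {z ∈ C | ω z = false}.ncard = m * q

/-- `N_{(p,q)}(ω)`: the number of distinct cycles of `step ω` of homology class `(p, q)`. -/
noncomputable def numCyclesPQ {n m : ℕ} (ω : Torus n m → Bool) (p q : ℕ) : ℕ :=
  {C ∈ cycles ω | HasHomology ω C p q}.ncard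

/-- The probability of an event under the uniform (CRSF) measure on the `2^{nm}`
configurations. -/
noncomputable def prob {n m : ℕ} (A : (Torus n m → Bool) → Prop) : ℝ :=
  ({ω | A ω} : Set (Torus n m → Bool)).ncard / 2 ^ (n * m)

/-- The expectation of a functional under the uniform (CRSF) measure on configurations. -/
noncomputable def expect {n m : ℕ} (f : (Torus n m → Bool) → ℝ) : ℝ :=
  (∑ᶠ ω, f ω) / 2 ^ (n * m)

section Aux

lemma sqrt_cross {a c A B : ℝ} (ha : 0 ≤ a) (hc : 0 ≤ c) (hA : 0 ≤ A) (hB : 0 ≤ B)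
    (h : a^2 * B ≤ c^2 * A) : a * Real.sqrt B ≤ c * Real.sqrt A := by
  have e1 : a * Real.sqrt B = Real.sqrt (a^2 * B) := by
    rw [Real.sqrt_mul (by positivity), Real.sqrt_sq ha]
  have e2 : c * Real.sqrt A = Real.sqrt (c^2 * A) := by
    rw [Real.sqrt_mul (by positivity), Real.sqrt_sq hc]
  rw [e1, e2]
  exact Real.sqrt_le_sqrt h

-- central binomial sqrt bound
lemma centralBinom_sqrt_le (h : ℕ) :
    (Nat.centralBinom h : ℝ) * Real.sqrt (3 * h + 1) ≤ 4 ^ h := by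
  induction h with
  | zero => simp [Nat.centralBinom]
  | succ h ih =>
    have hrec : ((h + 1 : ℕ) : ℝ) * Nat.centralBinom (h + 1)
        = 2 * (2 * h + 1) * Nat.centralBinom h := by
      exact_mod_cast congrArg (Nat.cast (R := ℝ)) (Nat.succ_mul_centralBinom_succ h)
    have key : (2 * (2 * (h:ℝ) + 1)) * Real.sqrt (3 * (h+1) + 1)
        ≤ 4 * ((h:ℝ) + 1) * Real.sqrt (3 * h + 1) := by
      apply sqrt_cross (by positivity) (by positivity) (by positivity) (by positivity)
      nlinarith [sq_nonneg ((h:ℝ))]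
    have hpos : (0:ℝ) < (h:ℝ) + 1 := by positivity
    have hcb : (Nat.centralBinom (h+1) : ℝ) = 2 * (2 * h + 1) * Nat.centralBinom h / ((h:ℝ)+1) := by
      field_simp at hrec ⊢
      push_cast at hrec ⊢
      linarith [hrec]
    rw [hcb, div_mul_eq_mul_div, div_le_iff₀ hpos]
    have hcbn : (0:ℝ) ≤ (Nat.centralBinom h : ℝ) := by positivity
    have hpow : (4:ℝ)^(h+1) = 4 * 4^h := by ring
    push_cast
    nlinarith [mul_le_mul_of_nonneg_left key hcbn,
      mul_le_mul_of_nonneg_left ih (by positivity : (0:ℝ) ≤ 4*((h:ℝ)+1)),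
      Real.sqrt_nonneg (3*((h:ℝ)+1)+1), Real.sqrt_nonneg (3*(h:ℝ)+1), hpow]

lemma choose_sqrt_le (L t : ℕ) : (L.choose t : ℝ) * Real.sqrt L ≤ 2 * 2 ^ L := by
  rcases Nat.even_or_odd L with ⟨h, hL⟩ | ⟨h, hL⟩
  · subst hL
    have h2 : h + h = 2 * h := by ring
    rw [h2]
    have hc : (2*h).choose t ≤ Nat.centralBinom h := Nat.choose_le_centralBinom t h
    have hs : Real.sqrt (2*h : ℕ) ≤ Real.sqrt (3 * h + 1) := by
      apply Real.sqrt_le_sqrt; push_cast; linarith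
    have := centralBinom_sqrt_le h
    have hpow : ((2:ℝ)) ^ (2*h) = 4 ^ h := by rw [pow_mul]; norm_num
    calc ((2*h).choose t : ℝ) * Real.sqrt (2*h : ℕ)
        ≤ (Nat.centralBinom h : ℝ) * Real.sqrt (3 * h + 1) := by
          apply mul_le_mul (by exact_mod_cast hc) hs (Real.sqrt_nonneg _) (by positivity)
      _ ≤ 4 ^ h := this
      _ ≤ 2 * 2 ^ (2*h) := by rw [hpow]; nlinarith [pow_pos (by norm_num : (0:ℝ) < 4) h]
  · subst hL
    have hmid : (2*h+1)/2 = h := by omega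
    have hc : (2*h+1).choose t ≤ (2*h+1).choose h := by
      have := Nat.choose_le_middle t (2*h+1)
      rwa [hmid] at this
    have hdouble : 2 * ((2*h+1).choose h) = Nat.centralBinom (h+1) := by
      have hsymm : (2*h+1).choose (h+1) = (2*h+1).choose h := by
        have := (Nat.choose_symm (n := 2*h+1) (k := h+1) (by omega)).symm
        simpa [show 2*h+1-(h+1) = h by omega] using this
      have hpascal : (2*h+2).choose (h+1) = (2*h+1).choose h + (2*h+1).choose (h+1) :=
        Nat.choose_succ_succ (2*h+1) h
      have hc2 : Nat.centralBinom (h+1) = (2*h+2).choose (h+1) := by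
        rw [Nat.centralBinom_eq_two_mul_choose, show 2*(h+1) = 2*h+2 from by ring]
      omega
    have hs : Real.sqrt (2*h+1 : ℕ) ≤ Real.sqrt (3 * (h+1) + 1) := by
      apply Real.sqrt_le_sqrt; push_cast; linarith
    have hcb := centralBinom_sqrt_le (h+1)
    have e1 : (2:ℝ)^(2*h+1) = 2 * 4^h := by
      rw [pow_succ, pow_mul]; norm_num [mul_comm]
    have hpow : ((4:ℝ)) ^ (h+1) = 2 * 2 ^ (2*h+1) := by
      rw [e1, pow_succ]; ring
    calc ((2*h+1).choose t : ℝ) * Real.sqrt (2*h+1 : ℕ)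
        ≤ ((2*h+1).choose h : ℝ) * Real.sqrt (3 * (h+1) + 1) := by
          apply mul_le_mul (by exact_mod_cast hc) hs (Real.sqrt_nonneg _) (by positivity)
      _ ≤ 2 * 2 ^ (2*h+1) := by
          rw [← hpow]
          have h2 : ((2*h+1).choose h : ℝ) = (Nat.centralBinom (h+1) : ℝ) / 2 := by
            have := congrArg (Nat.cast (R := ℝ)) hdouble
            push_cast at this
            linarith
          rw [h2]
          push_cast at hcb
          nlinarith [Real.sqrt_nonneg (3 * ((h:ℝ)+1) + 1),
            mul_nonneg (by positivity : (0:ℝ) ≤ (Nat.centralBinom (h+1):ℝ))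
              (Real.sqrt_nonneg (3 * ((h:ℝ)+1) + 1))]

lemma nat_ivt (g : ℕ → ℕ) (hg : ∀ i, g (i+1) ≤ g i + 1) (t : ℕ) :
    ∀ d, g 0 ≤ t → t ≤ g d → ∃ i, i ≤ d ∧ g i = t := by
  intro d
  induction d with
  | zero => intro h1 h2; exact ⟨0, le_refl _, le_antisymm h1 h2⟩
  | succ d ih =>
    intro h1 h2
    by_cases h : t ≤ g d
    · obtain ⟨i, hi, hgi⟩ := ih h1 h
      exact ⟨i, hi.trans (Nat.le_succ d), hgi⟩
    · push_neg at h
      exact ⟨d+1, le_refl _, by have := hg d; omega⟩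

def pstep {n m : ℕ} (b : Bool) (z : Torus n m) : Torus n m :=
  if b then (z.1 + 1, z.2) else (z.1, z.2 + 1)

lemma step_eq_pstep {n m : ℕ} (ω : Torus n m → Bool) (z : Torus n m) :
    step ω z = pstep (ω z) z := rfl

def wpath {n m : ℕ} (z0 : Torus n m) (w : ℕ → Bool) : ℕ → Torus n m
  | 0 => z0
  | (i+1) => pstep (w i) (wpath z0 w i)

def extw {L : ℕ} (w : Fin L → Bool) : ℕ → Bool :=
  fun i => if h : i < L then w ⟨i, h⟩ else false

def cpath {n m : ℕ} {L : ℕ} (c : ZMod m × (Fin L → Bool)) : ℕ → Torus n m :=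
  wpath ((0 : ZMod n), c.1) (extw c.2)

def verts {n m : ℕ} {L : ℕ} (c : ZMod m × (Fin L → Bool)) : Finset (Torus n m) :=
  (Finset.range L).image (cpath c)

def Realized {n m : ℕ} {L : ℕ} (ω : Torus n m → Bool) (c : ZMod m × (Fin L → Bool)) : Prop :=
  ∀ i, i < L → ω (cpath (n := n) c i) = extw c.2 i

open Finset in
lemma cycle_encode {n m p q : ℕ} (hn : 0 < n) (hp : 0 < p) (ω : Torus n m → Bool)
    {C : Set (Torus n m)} (hC : C ∈ cycles ω) (hH : HasHomology ω C p q) :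
    ∃ c : ZMod m × (Fin (n*p + m*q) → Bool),
      (Finset.univ.filter (fun i => c.2 i = true)).card = n * p ∧
      Realized ω c ∧ (verts (n := n) c : Set (Torus n m)) = C ∧
      (verts (n := n) c).card = n*p + m*q := by
  classical
  haveI : NeZero n := ⟨hn.ne'⟩
  set L := n*p + m*q with hLdef
  set f := step ω with hf
  obtain ⟨z, hz, hCdef⟩ := hC
  -- counting lemma for any base point of the orbit
  have count : ∀ u : Torus n m, u ∈ periodicPts f → C = {w | ∃ i : ℕ, f^[i] u = w} →
      ((range (minimalPeriod f u)).filter (fun j => ω (f^[j] u) = true)).card = n * p ∧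
      ((range (minimalPeriod f u)).filter (fun j => ω (f^[j] u) = false)).card = m * q ∧
      minimalPeriod f u = L := by
    intro u hu hCu
    set d := minimalPeriod f u with hdu
    have hinj : Set.InjOn (fun i => f^[i] u) ↑(range d) := by
      rw [coe_range]
      exact Function.iterate_injOn_Iio_minimalPeriod
    have hFC : ((range d).image (fun i => f^[i] u) : Set (Torus n m)) = C := by
      rw [hCu]
      ext w
      simp only [coe_image, coe_range, Set.mem_image, Set.mem_Iio, Set.mem_setOf_eq]
      constructor
      · rintro ⟨i, _, h⟩; exact ⟨i, h⟩
      · rintro ⟨i, h⟩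
        exact ⟨i % d, Nat.mod_lt _ (Function.minimalPeriod_pos_of_mem_periodicPts hu),
          by rw [hdu]; rw [Function.iterate_mod_minimalPeriod_eq]; exact h⟩
    have key : ∀ P : Torus n m → Prop, ∀ _ : DecidablePred P,
        ((range d).filter (fun j => P (f^[j] u))).card = {w ∈ C | P w}.ncard := by
      intro P hP
      have h1 : {w ∈ C | P w} = ↑(((range d).image (fun i => f^[i] u)).filter P) := by
        rw [← hFC]; ext w; simp
      rw [h1, Set.ncard_coe_finset, Finset.filter_image]
      rw [Finset.card_image_of_injOn (hinj.mono (Finset.coe_subset.mpr (Finset.filter_subset _ _)))]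
    have ht := key (fun w => ω w = true) (by infer_instance)
    have hfa := key (fun w => ω w = false) (by infer_instance)
    rw [hH.1] at ht
    rw [hH.2] at hfa
    refine ⟨ht, hfa, ?_⟩
    have hsplit := Finset.card_filter_add_card_filter_not
      (s := range d) (p := fun j => ω (f^[j] u) = true)
    have hne : (range d).filter (fun j => ¬ (ω (f^[j] u) = true))
        = (range d).filter (fun j => ω (f^[j] u) = false) := by
      apply Finset.filter_congr; intro j _; simp
    rw [hne] at hsplit
    rw [ht, hfa, Finset.card_range] at hsplit
    omega
  obtain ⟨htrue, _, hdL⟩ := count z hz hCdef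
  -- find a point on the cycle in column 0
  set g : ℕ → ℕ := fun i => (z.1.val) + ((range i).filter (fun j => ω (f^[j] z) = true)).card
    with hgdef
  have hgstep : ∀ i, g (i+1) ≤ g i + 1 := by
    intro i
    simp only [hgdef, Finset.range_add_one, Finset.filter_insert]
    by_cases h : ω (f^[i] z) = true
    · rw [if_pos h]
      have := Finset.card_insert_le i ((range i).filter (fun j => ω (f^[j] z) = true))
      omega
    · rw [if_neg h]; omega
  have hcoord : ∀ i, (f^[i] z).1 = ((g i : ℕ) : ZMod n) := by
    intro i
    induction i with
    | zero =>
      simp only [hgdef, Function.iterate_zero_apply, Finset.range_zero, Finset.filter_empty,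
        Finset.card_empty, Nat.add_zero]
      exact (ZMod.natCast_rightInverse z.1).symm
    | succ i ih =>
      rw [Function.iterate_succ_apply']
      have hg1 : g (i+1) = g i + (if ω (f^[i] z) = true then 1 else 0) := by
        simp only [hgdef, Finset.range_add_one, Finset.filter_insert]
        by_cases h : ω (f^[i] z) = true
        · rw [if_pos h, if_pos h, Finset.card_insert_of_notMem (by simp)]
          omega
        · rw [if_neg h, if_neg h]; omega
      by_cases h : ω (f^[i] z) = true
      · rw [hg1, if_pos h]
        show (step ω (f^[i] z)).1 = _
        rw [step, if_pos h]
        push_cast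
        rw [← ih]
      · rw [hg1, if_neg h]
        show (step ω (f^[i] z)).1 = _
        rw [step, if_neg h]
        simpa using ih
  have hivt : ∃ i, i ≤ minimalPeriod f z ∧ g i = n := by
    apply nat_ivt g hgstep n
    · simp only [hgdef]
      simpa using (ZMod.val_lt z.1).le
    · simp only [hgdef, htrue]
      nlinarith [ZMod.val_lt z.1]
  obtain ⟨i0, hi0, hgi0⟩ := hivt
  set z' := f^[i0] z with hz'
  have hz'per : z' ∈ periodicPts f := by
    obtain ⟨k, hk, hpk⟩ := Function.mem_periodicPts.mp hz
    exact Function.mk_mem_periodicPts hk (hpk.apply_iterate i0)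
  have hz'min : minimalPeriod f z' = L := by
    rw [hz', Function.minimalPeriod_apply_iterate hz i0, hdL]
  have hz'1 : z'.1 = 0 := by
    rw [hz', hcoord i0, hgi0, ZMod.natCast_self]
  have hCz' : C = {w | ∃ j : ℕ, f^[j] z' = w} := by
    rw [hCdef]
    ext w
    simp only [Set.mem_setOf_eq]
    constructor
    · rintro ⟨j, rfl⟩
      refine ⟨(minimalPeriod f z - i0) + j, ?_⟩
      show f^[minimalPeriod f z - i0 + j] (f^[i0] z) = f^[j] z
      rw [← Function.iterate_add_apply]
      have he : minimalPeriod f z - i0 + j + i0 = j + minimalPeriod f z := by omega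
      rw [he, Function.iterate_add_apply, Function.iterate_minimalPeriod]
    · rintro ⟨j, rfl⟩
      exact ⟨j + i0, by rw [hz', ← Function.iterate_add_apply]⟩
  obtain ⟨htrue', _, _⟩ := count z' hz'per hCz'
  rw [hz'min] at htrue'
  -- build the curve
  have hpath : ∀ i, i ≤ L →
      cpath (n := n) (z'.2, fun i : Fin L => ω (f^[(i : ℕ)] z')) i = f^[i] z' := by
    intro i
    induction i with
    | zero =>
      intro _
      show ((0 : ZMod n), z'.2) = z'
      rw [← hz'1]
    | succ i ih =>
      intro hiL
      have hi : i < L := hiL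
      have hrec : cpath (n := n) (z'.2, fun i : Fin L => ω (f^[(i : ℕ)] z')) (i+1)
          = pstep (extw (fun i : Fin L => ω (f^[(i : ℕ)] z')) i)
            (cpath (n := n) (z'.2, fun i : Fin L => ω (f^[(i : ℕ)] z')) i) := rfl
      have hext : extw (fun i : Fin L => ω (f^[(i : ℕ)] z')) i = ω (f^[i] z') := by
        simp [extw, hi]
      rw [hrec, ih (le_of_lt hi), hext, ← step_eq_pstep, Function.iterate_succ_apply']
  have hLpos : 0 < L := by
    have := Nat.mul_pos hn hp
    omega
  have hinj' : Set.InjOn (cpath (n := n) (z'.2, fun i : Fin L => ω (f^[(i : ℕ)] z')))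
      ↑(range L) := by
    intro a ha b hb hab
    rw [coe_range, Set.mem_Iio] at ha hb
    have hI := Function.iterate_injOn_Iio_minimalPeriod (f := f) (x := z')
    rw [hz'min] at hI
    exact hI ha hb (by show f^[a] z' = f^[b] z'; rw [← hpath a ha.le, ← hpath b hb.le]; exact hab)
  refine ⟨(z'.2, fun i : Fin L => ω (f^[(i : ℕ)] z')), ?_, ?_, ?_, ?_⟩
  · -- weight
    rw [← htrue']
    apply Finset.card_bij (fun (i : Fin L) _ => (i : ℕ))
    · intro a ha
      simp only [Finset.mem_filter, Finset.mem_univ, true_and] at ha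
      simp only [Finset.mem_filter, Finset.mem_range]
      exact ⟨a.isLt, ha⟩
    · intro a _ b _ h; exact Fin.ext h
    · intro b hb
      simp only [Finset.mem_filter, Finset.mem_range] at hb
      exact ⟨⟨b, hb.1⟩, by simp [hb.2], rfl⟩
  · -- Realized
    intro i hi
    rw [hpath i hi.le]
    simp [extw, hi]
  · -- verts = C
    rw [hCz']
    ext w
    simp only [verts, coe_image, coe_range, Set.mem_image, Set.mem_Iio, Set.mem_setOf_eq]
    constructor
    · rintro ⟨i, hi, rfl⟩
      exact ⟨i, (hpath i hi.le).symm⟩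
    · rintro ⟨j, rfl⟩
      refine ⟨j % L, Nat.mod_lt _ hLpos, ?_⟩
      rw [hpath _ (le_of_lt (Nat.mod_lt _ hLpos)), ← hz'min]
      exact Function.iterate_mod_minimalPeriod_eq
  · -- card
    rw [verts, Finset.card_image_of_injOn hinj', Finset.card_range]

lemma orbit_rebase {α : Type*} (f : α → α) {z : α} (hz : z ∈ periodicPts f) (j : ℕ) :
    {w | ∃ i : ℕ, f^[i] (f^[j] z) = w} = {w | ∃ i : ℕ, f^[i] z = w} := by
  have hd : 0 < minimalPeriod f z := Function.minimalPeriod_pos_of_mem_periodicPts hz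
  ext w
  simp only [Set.mem_setOf_eq]
  constructor
  · rintro ⟨i, rfl⟩
    exact ⟨i + j, by rw [Function.iterate_add_apply]⟩
  · rintro ⟨i, rfl⟩
    refine ⟨(j * minimalPeriod f z - j) + i, ?_⟩
    rw [← Function.iterate_add_apply]
    have hle : j ≤ j * minimalPeriod f z := Nat.le_mul_of_pos_right j hd
    have he : j * minimalPeriod f z - j + i + j = i + j * minimalPeriod f z := by omega
    rw [he, Function.iterate_add_apply]
    congr 1
    have : Function.IsPeriodicPt f (minimalPeriod f z * j) z :=
      (Function.isPeriodicPt_minimalPeriod f z).mul_const j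
    rw [mul_comm] at this
    exact this.eq

lemma cycles_eq_or_disjoint {n m : ℕ} (ω : Torus n m → Bool) {C C' : Set (Torus n m)}
    (hC : C ∈ cycles ω) (hC' : C' ∈ cycles ω) : C = C' ∨ C ∩ C' = ∅ := by
  obtain ⟨z, hz, rfl⟩ := hC
  obtain ⟨z', hz', rfl⟩ := hC'
  by_cases h : ({w | ∃ i : ℕ, (step ω)^[i] z = w} ∩ {w | ∃ i : ℕ, (step ω)^[i] z' = w} : Set _) = ∅
  · exact Or.inr h
  · left
    obtain ⟨w, hw1, hw2⟩ := Set.nonempty_iff_ne_empty.mpr h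
    obtain ⟨j, rfl⟩ := hw1
    obtain ⟨j', hj'⟩ := hw2
    rw [← orbit_rebase (step ω) hz j, ← orbit_rebase (step ω) hz' j', hj']

lemma exists_good_S {n m p q k : ℕ} (hn : 0 < n) (hm : 0 < m) (hp : 0 < p)
    (ω : Torus n m → Bool) (hk : k ≤ numCyclesPQ ω p q) :
    ∃ S : Finset (ZMod m × (Fin (n*p+m*q) → Bool)),
      S.card = k ∧
      (∀ c ∈ S, (Finset.univ.filter (fun i => c.2 i = true)).card = n*p) ∧
      (∀ c ∈ S, Realized ω c ∧ (verts (n := n) c).card = n*p+m*q) ∧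
      ((S : Set (ZMod m × (Fin (n*p+m*q) → Bool))).Pairwise
        fun c c' => Disjoint (verts (n := n) c) (verts (n := n) c')) := by
  classical
  haveI : NeZero n := ⟨hn.ne'⟩
  haveI : NeZero m := ⟨hm.ne'⟩
  set 𝒮 : Set (Set (Torus n m)) := {C | C ∈ cycles ω ∧ HasHomology ω C p q} with h𝒮
  have hfin : 𝒮.Finite := Set.toFinite _
  have hcard : k ≤ hfin.toFinset.card := by
    have h1 : 𝒮.ncard = hfin.toFinset.card := Set.ncard_eq_toFinset_card 𝒮 hfin
    have : numCyclesPQ ω p q = 𝒮.ncard := rfl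
    omega
  have henc : ∀ C : {C // C ∈ hfin.toFinset},
      ∃ c : ZMod m × (Fin (n*p + m*q) → Bool),
      (Finset.univ.filter (fun i => c.2 i = true)).card = n * p ∧
      Realized ω c ∧ (verts (n := n) c : Set (Torus n m)) = C.1 ∧
      (verts (n := n) c).card = n*p + m*q := by
    rintro ⟨C, hC⟩
    rw [Set.Finite.mem_toFinset] at hC
    exact cycle_encode hn hp ω hC.1 hC.2
  choose enc hw hr hv hvc using henc
  have hencinj : Function.Injective enc := by
    intro a b hab
    have : (a : Set (Torus n m)) = b := by rw [← hv a, ← hv b, hab]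
    exact Subtype.ext this
  set T : Finset (ZMod m × (Fin (n*p+m*q) → Bool)) := hfin.toFinset.attach.image enc with hT
  have hTcard : T.card = hfin.toFinset.card := by
    rw [hT, Finset.card_image_of_injective _ hencinj, Finset.card_attach]
  obtain ⟨S, hST, hScard⟩ := Finset.exists_subset_card_eq (s := T) (n := k) (by omega)
  have hmem : ∀ c ∈ S, ∃ C : {C // C ∈ hfin.toFinset}, enc C = c := by
    intro c hc
    have := hST hc
    rw [hT, Finset.mem_image] at this
    obtain ⟨C, _, hC⟩ := this
    exact ⟨C, hC⟩
  refine ⟨S, hScard, ?_, ?_, ?_⟩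
  · intro c hc
    obtain ⟨C, rfl⟩ := hmem c hc
    exact hw C
  · intro c hc
    obtain ⟨C, rfl⟩ := hmem c hc
    exact ⟨hr C, hvc C⟩
  · intro c hc c' hc' hne
    obtain ⟨C, rfl⟩ := hmem c hc
    obtain ⟨C', rfl⟩ := hmem c' hc'
    have hCC' : (C : Set (Torus n m)) ≠ C' := by
      intro h
      exact hne (congrArg enc (Subtype.ext h))
    have hC𝒮 : C.1 ∈ 𝒮 := by have := C.2; rwa [Set.Finite.mem_toFinset] at this
    have hC'𝒮 : C'.1 ∈ 𝒮 := by have := C'.2; rwa [Set.Finite.mem_toFinset] at this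
    rcases cycles_eq_or_disjoint ω hC𝒮.1 hC'𝒮.1 with h | h
    · exact absurd h hCC'
    · rw [Finset.disjoint_left]
      intro a ha ha'
      have h1 : a ∈ (C : Set (Torus n m)) := by rw [← hv C]; exact_mod_cast ha
      have h2 : a ∈ (C' : Set (Torus n m)) := by rw [← hv C']; exact_mod_cast ha'
      have : a ∈ (C : Set (Torus n m)) ∩ C' := ⟨h1, h2⟩
      rw [h] at this
      exact this

open Finset in
lemma words_card (L t : ℕ) :
    ((Finset.univ : Finset (Fin L → Bool)).filter
      (fun w => (Finset.univ.filter (fun i => w i = true)).card = t)).card = L.choose t := by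
  classical
  have h1 : ((Finset.univ : Finset (Fin L → Bool)).filter
      (fun w => (Finset.univ.filter (fun i => w i = true)).card = t)).card
      = (Finset.powersetCard t (Finset.univ : Finset (Fin L))).card := by
    apply Finset.card_bij (fun w _ => Finset.univ.filter (fun i => w i = true))
    · intro w hw
      simp only [Finset.mem_filter, Finset.mem_univ, true_and] at hw
      simp only [Finset.mem_powersetCard]
      exact ⟨Finset.subset_univ _, hw⟩
    · intro a ha b hb h
      simp only [Finset.ext_iff, Finset.mem_filter, Finset.mem_univ, true_and] at h
      funext i
      have := h i
      by_cases hai : a i <;> by_cases hbi : b i <;> simp_all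
    · intro S hS
      simp only [Finset.mem_powersetCard] at hS
      refine ⟨fun i => decide (i ∈ S), ?_, ?_⟩
      · simp only [Finset.mem_filter, Finset.mem_univ, true_and]
        rw [← hS.2]
        congr 1
        ext i
        simp
      · ext i
        simp
  rw [h1, Finset.card_powersetCard, Finset.card_univ, Fintype.card_fin]

open Finset in
lemma curves_card (n m L t : ℕ) (hm : 0 < m) :
    haveI : NeZero m := ⟨hm.ne'⟩
    ((Finset.univ : Finset (ZMod m × (Fin L → Bool))).filter
      (fun c => (Finset.univ.filter (fun i => c.2 i = true)).card = t)).card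
      = m * L.choose t := by
  classical
  haveI : NeZero m := ⟨hm.ne'⟩
  have hsplit : ((Finset.univ : Finset (ZMod m × (Fin L → Bool))).filter
      (fun c => (Finset.univ.filter (fun i => c.2 i = true)).card = t))
      = (Finset.univ : Finset (ZMod m)) ×ˢ
        ((Finset.univ : Finset (Fin L → Bool)).filter
          (fun w => (Finset.univ.filter (fun i => w i = true)).card = t)) := by
    ext c
    simp [Finset.mem_product]
  rw [hsplit, Finset.card_product, words_card]
  congr 1
  simp [ZMod.card]

open Finset in
lemma main_count {n m p q k : ℕ} (hn : 0 < n) (hm : 0 < m) (hp : 0 < p) (hq : 0 < q) :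
    haveI : NeZero n := ⟨hn.ne'⟩
    haveI : NeZero m := ⟨hm.ne'⟩
    ((Finset.univ : Finset (Torus n m → Bool)).filter
        (fun ω => k ≤ numCyclesPQ ω p q)).card * 2 ^ (k * (n*p+m*q))
      ≤ ((m * ((n*p+m*q).choose (n*p))).choose k) * 2 ^ (n * m) := by
  classical
  haveI : NeZero n := ⟨hn.ne'⟩
  haveI : NeZero m := ⟨hm.ne'⟩
  set L := n*p + m*q with hL
  set curves : Finset (ZMod m × (Fin L → Bool)) :=
    (Finset.univ.filter (fun c => (Finset.univ.filter (fun i => c.2 i = true)).card = n*p))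
    with hcurves
  set Bad : Finset (Torus n m → Bool) :=
    (Finset.univ.filter (fun ω => k ≤ numCyclesPQ ω p q)) with hBad
  -- choice of good S for each bad ω
  have hSfun : ∀ ω ∈ Bad, ∃ S : Finset (ZMod m × (Fin L → Bool)),
      S.card = k ∧
      (∀ c ∈ S, (Finset.univ.filter (fun i => c.2 i = true)).card = n*p) ∧
      (∀ c ∈ S, Realized ω c ∧ (verts (n := n) c).card = L) ∧
      ((S : Set (ZMod m × (Fin L → Bool))).Pairwise
        fun c c' => Disjoint (verts (n := n) c) (verts (n := n) c')) := by
    intro ω hω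
    rw [hBad, Finset.mem_filter] at hω
    exact exists_good_S hn hm hp ω hω.2
  choose! Sfun hS1 hS2 hS3 hS4 using hSfun
  have hmapsto : ∀ ω ∈ Bad, Sfun ω ∈ curves.powersetCard k := by
    intro ω hω
    rw [Finset.mem_powersetCard]
    constructor
    · intro c hc
      rw [hcurves, Finset.mem_filter]
      exact ⟨Finset.mem_univ _, hS2 ω hω c hc⟩
    · exact hS1 ω hω
  have hfiber : ∀ S ∈ curves.powersetCard k,
      ((Bad.filter (fun ω => Sfun ω = S)).card) * 2 ^ (k * L) ≤ 2 ^ (n * m) := by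
    intro S hS
    rcases Finset.eq_empty_or_nonempty (Bad.filter (fun ω => Sfun ω = S)) with he | ⟨ω0, hω0⟩
    · rw [he]
      simp
    · rw [Finset.mem_filter] at hω0
      obtain ⟨hω0Bad, hω0S⟩ := hω0
      set D : Finset (Torus n m) := S.biUnion (fun c => verts (n := n) c) with hD
      have hdisj : ∀ c ∈ S, ∀ c' ∈ S, c ≠ c' →
          Disjoint (verts (n := n) c) (verts (n := n) c') := by
        intro c hc c' hc' hne
        rw [← hω0S] at hc hc'
        exact hS4 ω0 hω0Bad (Finset.mem_coe.mpr hc) (Finset.mem_coe.mpr hc') hne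
      have hcards : ∀ c ∈ S, (verts (n := n) c).card = L := by
        intro c hc
        rw [← hω0S] at hc
        exact (hS3 ω0 hω0Bad c hc).2
      have hDcard : D.card = k * L := by
        rw [hD, Finset.card_biUnion hdisj, Finset.sum_congr rfl hcards, Finset.sum_const,
          smul_eq_mul]
        rw [Finset.mem_powersetCard] at hS
        rw [hS.2]
      have hDle : D.card ≤ n * m := by
        have h1 := Finset.card_le_univ D
        have h2 : Fintype.card (Torus n m) = n * m := by
          rw [Fintype.card_prod, ZMod.card, ZMod.card]
        omega
      -- injection into functions on the complement
      have hinj : (Bad.filter (fun ω => Sfun ω = S)).card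
          ≤ 2 ^ (n * m - D.card) := by
        have hcard2 : 2 ^ (n * m - D.card)
            = Fintype.card ({z : Torus n m // z ∉ D} → Bool) := by
          rw [Fintype.card_fun, Fintype.card_bool]
          congr 1
          rw [Fintype.card_subtype_compl, Fintype.card_coe]
          congr 1
          rw [Fintype.card_prod, ZMod.card, ZMod.card]
        rw [hcard2, ← Finset.card_univ]
        apply Finset.card_le_card_of_injOn (fun ω => (fun z : {z : Torus n m // z ∉ D} => ω z.1))
        · intro _ _; exact Finset.mem_univ _
        · intro ω hω ω' hω' hres
          rw [Finset.mem_coe, Finset.mem_filter] at hω hω'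
          funext z
          by_cases hz : z ∈ D
          · rw [hD, Finset.mem_biUnion] at hz
            obtain ⟨c, hcS, hzc⟩ := hz
            rw [verts, Finset.mem_image] at hzc
            obtain ⟨i, hi, rfl⟩ := hzc
            rw [Finset.mem_range] at hi
            have r1 := (hS3 ω hω.1 c (by rw [hω.2]; exact hcS)).1 i hi
            have r2 := (hS3 ω' hω'.1 c (by rw [hω'.2]; exact hcS)).1 i hi
            rw [r1, r2]
          · exact congrFun hres ⟨z, hz⟩
      calc (Bad.filter (fun ω => Sfun ω = S)).card * 2 ^ (k * L)
          ≤ 2 ^ (n * m - D.card) * 2 ^ (k * L) := by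
            exact Nat.mul_le_mul_right _ hinj
        _ = 2 ^ (n * m) := by
            rw [← pow_add, hDcard]
            congr 1
            omega
  calc Bad.card * 2 ^ (k * L)
      = (∑ S ∈ curves.powersetCard k, (Bad.filter (fun ω => Sfun ω = S)).card) * 2 ^ (k * L) := by
        rw [← Finset.card_eq_sum_card_fiberwise hmapsto]
    _ = ∑ S ∈ curves.powersetCard k, (Bad.filter (fun ω => Sfun ω = S)).card * 2 ^ (k * L) := by
        rw [Finset.sum_mul]
    _ ≤ ∑ S ∈ curves.powersetCard k, 2 ^ (n * m) := Finset.sum_le_sum hfiber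
    _ = (curves.powersetCard k).card * 2 ^ (n * m) := by rw [Finset.sum_const, smul_eq_mul]
    _ = ((m * (L.choose (n*p))).choose k) * 2 ^ (n * m) := by
        rw [Finset.card_powersetCard]
        congr 2
        exact curves_card n m L (n*p) hm

end Aux

set_option maxHeartbeats 1000000 in
/-- Rational spike near `p/q`, upper bound: if `m(n) = (p/q)n + ρ√n(1+o(1))` with
`ρ > 0`, then there is `C > 0` with `P(N_{(p,q)} > C n^{1/2}) ≤ exp(-C⁻¹ n^{1/2})`
for large `n`. -/
theorem rational_spike_upper (p q : ℕ) (hp : 0 < p) (hq : 0 < q)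
    (hpq : Nat.Coprime p q) (ρ : ℝ) (hρ : 0 < ρ) (m : ℕ → ℕ)
    (hm : Tendsto (fun n : ℕ => ((m n : ℝ) - (p : ℝ) / q * n) / Real.sqrt n)
      atTop (nhds ρ)) :
    ∃ C > 0, ∀ᶠ n : ℕ in atTop,
      prob (n := n) (m := m n)
          (fun ω => C * Real.sqrt n < (numCyclesPQ ω p q : ℝ)) ≤
        Real.exp (-C⁻¹ * Real.sqrt n) := by
  classical
  have hqR : (0:ℝ) < (q:ℝ) := by exact_mod_cast hq
  set B : ℝ := (p:ℝ)/(q:ℝ) + 2*ρ + 1 with hBdef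
  have hBpos : 0 < B := by positivity
  set C : ℝ := max 1 (6 * B * Real.exp 1) with hCdef
  have hC1 : (1:ℝ) ≤ C := le_max_left _ _
  have hC2 : 6 * B * Real.exp 1 ≤ C := le_max_right _ _
  have hCpos : (0:ℝ) < C := lt_of_lt_of_le one_pos hC1
  refine ⟨C, hCpos, ?_⟩
  have hup : ∀ᶠ n in atTop, ((m n : ℝ) - (p:ℝ)/q * n)/Real.sqrt n < 2*ρ :=
    hm.eventually_lt_const (by linarith)
  have hlo : ∀ᶠ n in atTop, 0 < ((m n : ℝ) - (p:ℝ)/q * n)/Real.sqrt n :=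
    hm.eventually_const_lt hρ
  filter_upwards [hup, hlo, eventually_ge_atTop 1] with n hupn hlon hn1
  have hn0 : 0 < n := hn1
  have hnR : (0:ℝ) < n := by exact_mod_cast hn0
  have hnR1 : (1:ℝ) ≤ n := by exact_mod_cast hn1
  have hs0 : 0 < Real.sqrt n := Real.sqrt_pos.mpr hnR
  have hsle : Real.sqrt n ≤ n := by
    have h := Real.sqrt_le_sqrt (show (n:ℝ) ≤ (n:ℝ)^2 by nlinarith)
    rwa [Real.sqrt_sq hnR.le] at h
  -- bounds on m n
  have hnum_pos : 0 < (m n : ℝ) - (p:ℝ)/q * n := by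
    have := mul_pos hlon hs0
    rwa [div_mul_cancel₀ _ hs0.ne'] at this
  have hm1 : 0 < m n := by
    have hpq0 : (0:ℝ) < (p:ℝ)/q * n := by
      have hpR : (0:ℝ) < (p:ℝ) := by exact_mod_cast hp
      positivity
    have : (0:ℝ) < (m n : ℝ) := by linarith
    exact_mod_cast this
  have hub : (m n : ℝ) ≤ B * n := by
    have h1 : (m n : ℝ) - (p:ℝ)/q * n < 2*ρ * Real.sqrt n := by
      rw [div_lt_iff₀ hs0] at hupn
      linarith
    have h2 : 2*ρ * Real.sqrt n ≤ 2*ρ*n := by nlinarith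
    rw [hBdef]
    nlinarith
  -- notation
  haveI : NeZero n := ⟨hn0.ne'⟩
  haveI : NeZero (m n) := ⟨hm1.ne'⟩
  set M := m n with hM
  set L := n*p + M*q with hLdef
  set k := ⌈C * Real.sqrt n⌉₊ with hk
  have hkC : C * Real.sqrt n ≤ (k:ℝ) := Nat.le_ceil _
  have hkpos : 0 < k := Nat.ceil_pos.mpr (by positivity)
  have hkR : (0:ℝ) < (k:ℝ) := by exact_mod_cast hkpos
  have hLn : (n:ℝ) ≤ (L:ℝ) := by
    have : n ≤ L := by
      have h1 : n * 1 ≤ n * p := Nat.mul_le_mul_left n hp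
      omega
    exact_mod_cast this
  -- probability comparison via counting
  have hprob : prob (n := n) (m := M)
      (fun ω => C * Real.sqrt n < (numCyclesPQ ω p q : ℝ))
      ≤ ((M * (L.choose (n*p))).choose k : ℝ) / 2 ^ (k * L) := by
    have hsub : {ω : Torus n M → Bool | C * Real.sqrt n < (numCyclesPQ ω p q : ℝ)}
        ⊆ ↑(Finset.univ.filter fun ω : Torus n M → Bool => k ≤ numCyclesPQ ω p q) := by
      intro ω hω
      simp only [Set.mem_setOf_eq] at hω
      simp only [Finset.coe_filter, Set.mem_setOf_eq, Finset.mem_univ, true_and]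
      exact Nat.ceil_le.mpr (le_of_lt hω)
    have h1 : ({ω : Torus n M → Bool | C * Real.sqrt n < (numCyclesPQ ω p q : ℝ)}).ncard
        ≤ (Finset.univ.filter fun ω : Torus n M → Bool => k ≤ numCyclesPQ ω p q).card := by
      have := Set.ncard_le_ncard hsub (Set.toFinite _)
      rwa [Set.ncard_coe_finset] at this
    have h2 := main_count (n := n) (m := M) (p := p) (q := q) (k := k) hn0 hm1 hp hq
    show (({ω : Torus n M → Bool | C * Real.sqrt n < (numCyclesPQ ω p q : ℝ)}).ncard : ℝ)
        / 2 ^ (n * M) ≤ ((M * (L.choose (n*p))).choose k : ℝ) / 2 ^ (k * L)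
    rw [div_le_div_iff₀ (by positivity) (by positivity)]
    have h2R : ((Finset.univ.filter
          (fun ω : Torus n M → Bool => k ≤ numCyclesPQ ω p q)).card : ℝ) * 2 ^ (k * L)
        ≤ ((M * (L.choose (n*p))).choose k : ℝ) * 2 ^ (n * M) := by
      exact_mod_cast h2
    calc (({ω : Torus n M → Bool | C * Real.sqrt n < (numCyclesPQ ω p q : ℝ)}).ncard : ℝ)
          * (2:ℝ) ^ (k * L)
        ≤ ((Finset.univ.filter
            (fun ω : Torus n M → Bool => k ≤ numCyclesPQ ω p q)).card : ℝ) * 2 ^ (k * L) := by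
          have h1R : (({ω : Torus n M → Bool |
              C * Real.sqrt n < (numCyclesPQ ω p q : ℝ)}).ncard : ℝ)
              ≤ ((Finset.univ.filter
                (fun ω : Torus n M → Bool => k ≤ numCyclesPQ ω p q)).card : ℝ) := by
            exact_mod_cast h1
          exact mul_le_mul_of_nonneg_right h1R (by positivity)
      _ ≤ ((M * (L.choose (n*p))).choose k : ℝ) * 2 ^ (n * M) := h2R
  refine le_trans hprob ?_
  -- analytic estimate
  set Mc : ℕ := M * (L.choose (n*p)) with hMc
  have hMub : (M:ℝ) ≤ B * n := hub
  have hMpos : (0:ℝ) < M := by exact_mod_cast hm1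
  have hfac : (0:ℝ) < (Nat.factorial k : ℝ) := by exact_mod_cast Nat.factorial_pos k
  have h2L : (0:ℝ) < 2 ^ L := by positivity
  -- step 1: choose bound
  have hstep1 : ((Mc.choose k : ℝ)) / 2 ^ (k * L)
      ≤ ((Mc:ℝ) / 2 ^ L) ^ k / (Nat.factorial k : ℝ) := by
    have h1 : (Mc.choose k : ℝ) * (Nat.factorial k : ℝ) ≤ (Mc:ℝ) ^ k := by
      have h0 := Nat.choose_le_pow_div (α := ℝ) k Mc
      rw [le_div_iff₀ hfac] at h0
      exact h0
    have hpow : (2:ℝ) ^ (k * L) = (2 ^ L) ^ k := by rw [← pow_mul, mul_comm]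
    rw [hpow, div_pow, div_div, div_le_div_iff₀ (by positivity) (by positivity)]
    calc (Mc.choose k : ℝ) * ((2 ^ L) ^ k * (Nat.factorial k : ℝ))
        = ((Mc.choose k : ℝ) * (Nat.factorial k : ℝ)) * (2 ^ L) ^ k := by ring
      _ ≤ (Mc:ℝ) ^ k * (2 ^ L) ^ k := mul_le_mul_of_nonneg_right h1 (by positivity)
  -- step 2: base bound
  have hsL : Real.sqrt n ≤ Real.sqrt L := Real.sqrt_le_sqrt hLn
  have hbase : ((Mc:ℝ)) / 2 ^ L ≤ 2 * M / Real.sqrt n := by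
    have h5 : ((Mc:ℝ)) = (M:ℝ) * (L.choose (n*p) : ℝ) := by rw [hMc]; push_cast; ring
    rw [div_le_div_iff₀ h2L hs0]
    calc (Mc:ℝ) * Real.sqrt n = (M:ℝ) * ((L.choose (n*p):ℝ) * Real.sqrt n) := by
          rw [h5]; ring
      _ ≤ (M:ℝ) * ((L.choose (n*p):ℝ) * Real.sqrt L) := by
          apply mul_le_mul_of_nonneg_left
            (mul_le_mul_of_nonneg_left hsL (by positivity)) hMpos.le
      _ ≤ (M:ℝ) * (2 * 2^L) := mul_le_mul_of_nonneg_left (choose_sqrt_le L (n*p)) hMpos.le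
      _ = 2 * M * 2 ^ L := by ring
  -- step 3: factorial bound
  have hstep3 : ((k:ℝ)) ^ k / (Nat.factorial k : ℝ) ≤ Real.exp k :=
    Real.pow_div_factorial_le_exp (x := (k:ℝ)) (by positivity) k
  -- combine
  have hbase0 : (0:ℝ) ≤ (Mc:ℝ) / 2 ^ L := by positivity
  have hcomb : ((Mc:ℝ) / 2 ^ L) ^ k / (Nat.factorial k : ℝ)
      ≤ (2 * M * Real.exp 1 / (Real.sqrt n * k)) ^ k := by
    have h7 : ((Mc:ℝ) / 2 ^ L) ^ k ≤ (2 * M / Real.sqrt n) ^ k :=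
      pow_le_pow_left₀ hbase0 hbase k
    have h8 : (1:ℝ) / (Nat.factorial k : ℝ) ≤ Real.exp 1 ^ k / (k:ℝ) ^ k := by
      rw [div_le_div_iff₀ hfac (by positivity)]
      have h9 : ((k:ℝ)) ^ k ≤ Real.exp (k:ℝ) * (Nat.factorial k : ℝ) := by
        rw [div_le_iff₀ hfac] at hstep3
        exact hstep3
      have h10 : Real.exp (k:ℝ) = Real.exp 1 ^ k := by
        rw [← Real.exp_nat_mul]
        norm_num
      rw [h10] at h9
      linarith
    calc ((Mc:ℝ) / 2 ^ L) ^ k / (Nat.factorial k : ℝ)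
        = ((Mc:ℝ) / 2 ^ L) ^ k * (1 / (Nat.factorial k : ℝ)) := by ring
      _ ≤ (2 * M / Real.sqrt n) ^ k * (Real.exp 1 ^ k / (k:ℝ) ^ k) :=
          mul_le_mul h7 h8 (by positivity) (by positivity)
      _ = (2 * M * Real.exp 1 / (Real.sqrt n * k)) ^ k := by
          rw [← div_pow, ← mul_pow, div_mul_div_comm]
  -- the base is at most exp(-1)
  have hfinal : 2 * M * Real.exp 1 / (Real.sqrt n * k) ≤ Real.exp (-1) := by
    have hnn : Real.sqrt n * Real.sqrt n = n := Real.mul_self_sqrt hnR.le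
    have hden : C * (n:ℝ) ≤ Real.sqrt n * k := by
      have e : Real.sqrt n * (C * Real.sqrt n) = C * (Real.sqrt n * Real.sqrt n) := by ring
      rw [hnn] at e
      calc C * (n:ℝ) = Real.sqrt n * (C * Real.sqrt n) := e.symm
        _ ≤ Real.sqrt n * k := mul_le_mul_of_nonneg_left hkC hs0.le
    have hnum : 2 * (M:ℝ) * Real.exp 1 ≤ 2 * B * Real.exp 1 * n := by
      have h := mul_le_mul_of_nonneg_right hMub (Real.exp_pos 1).le
      have h2' : 2 * ((M:ℝ) * Real.exp 1) ≤ 2 * (B * (n:ℝ) * Real.exp 1) := by linarith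
      calc 2 * (M:ℝ) * Real.exp 1 = 2 * ((M:ℝ) * Real.exp 1) := by ring
        _ ≤ 2 * (B * (n:ℝ) * Real.exp 1) := h2'
        _ = 2 * B * Real.exp 1 * n := by ring
    have hCn : (0:ℝ) < C * n := by positivity
    have h12 : 2 * (M:ℝ) * Real.exp 1 / (Real.sqrt n * k)
        ≤ 2 * B * Real.exp 1 * n / (C * n) := by
      rw [div_le_div_iff₀ (by positivity) hCn]
      exact mul_le_mul hnum hden (by positivity) (by positivity)
    have h13 : 2 * B * Real.exp 1 * (n:ℝ) / (C * n) = 2 * B * Real.exp 1 / C := by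
      rw [mul_div_mul_right _ _ hnR.ne']
    have h14 : 2 * B * Real.exp 1 / C ≤ 1/3 := by
      rw [div_le_div_iff₀ hCpos (by norm_num)]
      linarith
    have h15 : (1:ℝ)/3 ≤ Real.exp (-1) := by
      rw [Real.exp_neg, ← one_div, div_le_div_iff₀ (by norm_num : (0:ℝ) < 3) (Real.exp_pos 1)]
      have := Real.exp_one_lt_d9
      linarith
    calc 2 * (M:ℝ) * Real.exp 1 / (Real.sqrt n * k)
        ≤ 2 * B * Real.exp 1 * n / (C * n) := h12
      _ = 2 * B * Real.exp 1 / C := h13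
      _ ≤ 1/3 := h14
      _ ≤ Real.exp (-1) := h15
  -- wrap up
  have hCinv : C⁻¹ ≤ C := by
    have h0 : C⁻¹ * C = 1 := inv_mul_cancel₀ hCpos.ne'
    nlinarith
  calc ((Mc.choose k : ℝ)) / 2 ^ (k * L)
      ≤ ((Mc:ℝ) / 2 ^ L) ^ k / (Nat.factorial k : ℝ) := hstep1
    _ ≤ (2 * M * Real.exp 1 / (Real.sqrt n * k)) ^ k := hcomb
    _ ≤ (Real.exp (-1)) ^ k := pow_le_pow_left₀ (by positivity) hfinal k
    _ = Real.exp (-(k:ℝ)) := by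
        rw [← Real.exp_nat_mul]
        ring_nf
    _ ≤ Real.exp (-C⁻¹ * Real.sqrt n) := by
        apply Real.exp_le_exp.mpr
        have h11 : C⁻¹ * Real.sqrt n ≤ C * Real.sqrt n :=
          mul_le_mul_of_nonneg_right hCinv hs0.le
        have h16 : C⁻¹ * Real.sqrt n ≤ (k:ℝ) := le_trans h11 hkC
        linarith
end

section
/- Fix constants C > 1 and ε > 0. There exist c > 0 and n₀ such that for all n ≥ n₀ and all integers m with n < m < C·n the following holds. Let a_i and p_j/q_j denote the partial quotients and convergents of the continued fraction expansion of m/n, and let j be such that q_j ≤ n^{1/3 − ε/2} < q_{j+1}. If a_j < n^{ε/2} and a_{j+1} ≤ n^{ε/4}, then, on the torus T = (ZMod n) × (ZMod m), the probability that φ_ω has a cycle of length at most n^{4/3 − ε} is at most exp(−c·n^{ε/2}). -/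
open Function Filter

/-- Partial quotients of `m/n` via the Euclidean algorithm:
`cfQuots n m = [a₀, a₁, …, a_l]` where `m/n = a₀ + 1/(a₁ + 1/(⋯ + 1/a_l))`. -/
def cfQuots : ℕ → ℕ → List ℕ
  | 0, _ => []
  | (n+1), m => (m / (n+1)) :: cfQuots (m % (n+1)) (n+1)
  termination_by n _ => n
  decreasing_by exact Nat.mod_lt _ (Nat.succ_pos _)

/-- Auxiliary recursion for the convergents: `p_j = a_j p_{j-1} + p_{j-2}`,
`q_j = a_j q_{j-1} + q_{j-2}`, starting from `(p_{-2},q_{-2}) = (0,1)` and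
`(p_{-1},q_{-1}) = (1,0)`. -/
def convAux : List ℕ → ℕ × ℕ → ℕ × ℕ → List (ℕ × ℕ)
  | [], _, _ => []
  | a :: as, p2, p1 =>
    (a * p1.1 + p2.1, a * p1.2 + p2.2) :: convAux as p1 (a * p1.1 + p2.1, a * p1.2 + p2.2)

/-- The list of convergents `(p_j, q_j)`, `j = 0, 1, …, l`, of `m/n` (in lowest terms). -/
def convergents (n m : ℕ) : List (ℕ × ℕ) :=
  convAux (cfQuots n m) (0, 1) (1, 0)

section CF

/-- Remainder sequence of the Euclid algorithm on the pair `(x,y)`: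
`eR 0 (x,y) = y % x`, and shifts. -/
def eR : ℕ → ℕ × ℕ → ℕ
  | 0, xy => xy.2 % xy.1
  | (j+1), xy => eR j (xy.2 % xy.1, xy.1)

lemma cfQuots_pos (x y : ℕ) (hx : 0 < x) :
    cfQuots x y = (y / x) :: cfQuots (y % x) x := by
  obtain ⟨x', rfl⟩ := Nat.exists_eq_succ_of_ne_zero hx.ne'
  rw [cfQuots]

lemma cfQuots_zero (y : ℕ) : cfQuots 0 y = [] := by rw [cfQuots]

/-- Invariant carried along the continued-fraction recursion. -/
structure CFInv (N M x y : ℕ) (s : ℤ) (p2 p1 : ℕ × ℕ) : Prop where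
  hs : s = 1 ∨ s = -1
  hxy : x < y
  r1 : (p1.2 : ℤ) * M - p1.1 * N = -s * x
  r2 : (p2.2 : ℤ) * M - p2.1 * N = s * y
  hK : p1.2 * y + p2.2 * x = N
  det : (p2.1 : ℤ) * p1.2 - p1.1 * p2.2 = -s
  pos : 0 < p1.2 + p2.2

lemma CFInv.step {N M x y : ℕ} {s : ℤ} {p2 p1 : ℕ × ℕ} (h : CFInv N M x y s p2 p1)
    (hx : 0 < x) :
    CFInv N M (y % x) x (-s) p1 ((y/x) * p1.1 + p2.1, (y/x) * p1.2 + p2.2) := by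
  set A := y / x with hA
  set R := y % x with hR
  have ha : 1 ≤ A := (Nat.one_le_div_iff hx).2 h.hxy.le
  have hdm0 : x * A + R = y := by rw [hA, hR]; exact Nat.div_add_mod y x
  have hdm : (x : ℤ) * (A : ℤ) + (R : ℤ) = (y : ℤ) := by exact_mod_cast hdm0
  refine ⟨by rcases h.hs with h1 | h1 <;> simp [h1], by rw [hR]; exact Nat.mod_lt _ hx,
    ?_, ?_, ?_, ?_, ?_⟩
  · push_cast
    linear_combination (A : ℤ) * h.r1 + h.r2 - s * hdm
  · simpa using h.r1
  · calc (A * p1.2 + p2.2) * x + p1.2 * R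
        = p1.2 * (x * A + R) + p2.2 * x := by ring
      _ = p1.2 * y + p2.2 * x := by rw [hdm0]
      _ = N := h.hK
  · push_cast
    linear_combination -h.det
  · have h1 : p1.2 ≤ A * p1.2 := Nat.le_mul_of_pos_left _ ha
    have h2 := h.pos
    show 0 < (A * p1.2 + p2.2) + p1.2
    omega

lemma CFInv.q_le {N M x y : ℕ} {s : ℤ} {p2 p1 : ℕ × ℕ} (h : CFInv N M x y s p2 p1)
    (hx : 0 < x) : p1.2 ≤ (y/x) * p1.2 + p2.2 := by
  have ha : 1 ≤ y / x := (Nat.one_le_div_iff hx).2 h.hxy.le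
  have h1 : p1.2 ≤ (y/x) * p1.2 := Nat.le_mul_of_pos_left _ ha
  omega

lemma cf_master (N M : ℕ) : ∀ x : ℕ, 0 < x → ∀ y : ℕ, ∀ s : ℤ, ∀ p2 p1 : ℕ × ℕ,
    CFInv N M x y s p2 p1 →
    ∀ j pq, (convAux (cfQuots x y) p2 p1)[j]? = some pq →
      ((pq.2 : ℤ) * M - pq.1 * N = s * (-1)^j * eR j (x,y)) ∧ 0 < pq.2 ∧
      (∀ pq', (convAux (cfQuots x y) p2 p1)[j+1]? = some pq' →
        pq.2 ≤ pq'.2 ∧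
        (∀ a', (cfQuots x y)[j+1]? = some a' → pq'.2 ≤ (a'+1) * pq.2) ∧
        pq'.2 * eR j (x,y) + pq.2 * eR (j+1) (x,y) = N ∧
        (∃ u : ℤ, (u = 1 ∨ u = -1) ∧ (pq.1:ℤ) * pq'.2 - pq'.1 * pq.2 = u) ∧
        eR (j+1) (x,y) < eR j (x,y)) := by
  intro x
  induction x using Nat.strong_induction_on with
  | _ x IH =>
    intro hx y s p2 p1 hInv j pq hpq
    have ha : 1 ≤ y / x := (Nat.one_le_div_iff hx).2 hInv.hxy.le
    rw [cfQuots_pos x y hx] at hpq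
    set a := y / x with hadef
    set x' := y % x with hx'def
    set e0 : ℕ × ℕ := (a * p1.1 + p2.1, a * p1.2 + p2.2) with he0
    have hunf : convAux ((a) :: cfQuots x' x) p2 p1
        = e0 :: convAux (cfQuots x' x) p1 e0 := rfl
    rw [hunf] at hpq
    have hx'lt : x' < x := Nat.mod_lt _ hx
    cases j with
    | zero =>
      simp only [List.getElem?_cons_zero, Option.some.injEq] at hpq
      subst hpq
      have hdm : (x : ℤ) * (a : ℤ) + (x' : ℤ) = (y : ℤ) := by
        exact_mod_cast Nat.div_add_mod y x
      refine ⟨?_, ?_, ?_⟩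
      · show ((a * p1.2 + p2.2 : ℕ) : ℤ) * M - ((a * p1.1 + p2.1 : ℕ) : ℤ) * N
            = s * (-1)^0 * eR 0 (x,y)
        have : eR 0 (x,y) = x' := rfl
        rw [this]
        push_cast
        linear_combination (a : ℤ) * hInv.r1 + hInv.r2 - s * hdm
      · have h1 : p1.2 ≤ a * p1.2 := Nat.le_mul_of_pos_left _ ha
        have h2 := hInv.pos
        show 0 < a * p1.2 + p2.2
        omega
      · intro pq' hpq'
        rw [cfQuots_pos x y hx, hunf, List.getElem?_cons_succ] at hpq'
        -- pq' is entry 0 of the tail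
        rcases Nat.eq_zero_or_pos x' with hx0 | hx0
        · rw [hx0, cfQuots_zero] at hpq'
          simp [convAux] at hpq'
        have hInv' := hInv.step hx
        rw [cfQuots_pos x' x hx0] at hpq'
        set a' := x / x' with ha'def
        set e1 : ℕ × ℕ := (a' * e0.1 + p1.1, a' * e0.2 + p1.2) with he1
        have hunf' : convAux ((a') :: cfQuots (x % x') x') p1 e0
            = e1 :: convAux (cfQuots (x % x') x') e0 e1 := rfl
        rw [hunf'] at hpq'
        simp only [List.getElem?_cons_zero, Option.some.injEq] at hpq'
        subst hpq'
        have ha1 : 1 ≤ a' := (Nat.one_le_div_iff hx0).2 hx'lt.le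
        have hq01 : p1.2 ≤ e0.2 := hInv.q_le hx
        have heR0 : eR 0 (x,y) = x' := rfl
        have heR1 : eR 1 (x,y) = x % x' := rfl
        refine ⟨?_, ?_, ?_, ?_, ?_⟩
        · show e0.2 ≤ a' * e0.2 + p1.2
          have : e0.2 ≤ a' * e0.2 := Nat.le_mul_of_pos_left _ ha1
          omega
        · intro A hA
          rw [cfQuots_pos x y hx, List.getElem?_cons_succ, cfQuots_pos x' x hx0,
            List.getElem?_cons_zero] at hA
          have : A = a' := by rw [ha'def]; injection hA with h; exact h.symm
          subst this
          show a' * e0.2 + p1.2 ≤ (a' + 1) * e0.2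
          have : a' * e0.2 + p1.2 ≤ a' * e0.2 + e0.2 := by omega
          calc a' * e0.2 + p1.2 ≤ a' * e0.2 + e0.2 := this
            _ = (a' + 1) * e0.2 := by ring
        · rw [heR0, heR1]
          have hK' : e0.2 * x + p1.2 * x' = N := hInv'.hK
          have hx2 : x' * a' + x % x' = x := Nat.div_add_mod x x'
          calc (a' * e0.2 + p1.2) * x' + e0.2 * (x % x')
              = e0.2 * (x' * a' + x % x') + p1.2 * x' := by ring
            _ = e0.2 * x + p1.2 * x' := by rw [hx2]
            _ = N := hK'
        · refine ⟨-s, ?_, ?_⟩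
          · rcases hInv.hs with h1 | h1 <;> simp [h1]
          · have hdet' := hInv'.det
            show (e0.1 : ℤ) * (a' * e0.2 + p1.2 : ℕ) - ((a' * e0.1 + p1.1 : ℕ) : ℤ) * e0.2 = -s
            push_cast
            simp only [he0, hadef, Nat.cast_add, Nat.cast_mul] at hdet' ⊢
            linear_combination -hdet'
        · rw [heR0, heR1]
          exact Nat.mod_lt _ hx0
    | succ j' =>
      rw [List.getElem?_cons_succ] at hpq
      rcases Nat.eq_zero_or_pos x' with hx0 | hx0
      · rw [hx0, cfQuots_zero] at hpq
        simp [convAux] at hpq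
      have hInv' := hInv.step hx
      have := IH x' hx'lt hx0 x (-s) p1 e0 hInv' j' pq hpq
      obtain ⟨hres, hpos, hpair⟩ := this
      refine ⟨?_, hpos, ?_⟩
      · have : eR (j' + 1) (x, y) = eR j' (x', x) := rfl
        rw [this, hres]
        ring
      · intro pq' hpq'
        rw [cfQuots_pos x y hx, hunf, List.getElem?_cons_succ] at hpq'
        have hmain := hpair pq' hpq'
        obtain ⟨h1, h2, h3, h4, h5⟩ := hmain
        have e1 : eR (j' + 1) (x, y) = eR j' (x', x) := rfl
        have e2 : eR (j' + 1 + 1) (x, y) = eR (j' + 1) (x', x) := rfl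
        refine ⟨h1, ?_, by rw [e1, e2]; exact h3, h4, by rw [e1, e2]; exact h5⟩
        intro A hA
        apply h2
        rw [cfQuots_pos x y hx, List.getElem?_cons_succ] at hA
        exact hA

end CF

section CF2

lemma bestapprox (N M pj qj pj1 qj1 d d1 : ℤ) (σ u : ℤ)
    (hσ : σ = 1 ∨ σ = -1) (hu : u = 1 ∨ u = -1)
    (hd : 0 ≤ d) (hd1 : 0 ≤ d1)
    (hr : qj * M - pj * N = σ * d) (hr1 : qj1 * M - pj1 * N = -σ * d1)
    (hdet : pj * qj1 - pj1 * qj = u)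
    (hqj : 0 < qj)
    (P Q : ℤ) (hQpos : 0 < Q) (hQlt : Q < qj1) :
    d ≤ |Q * M - P * N| := by
  have hu2 : u * u = 1 := by rcases hu with h | h <;> simp [h]
  set xx := u * (P * qj1 - pj1 * Q) with hxx
  set yy := u * (pj * Q - P * qj) with hyy
  have hP : xx * pj + yy * pj1 = P := by
    have h1 : xx * pj + yy * pj1 = u * P * (pj * qj1 - pj1 * qj) := by rw [hxx, hyy]; ring
    rw [h1, hdet]
    linear_combination P * hu2
  have hQ : xx * qj + yy * qj1 = Q := by
    have h1 : xx * qj + yy * qj1 = u * Q * (pj * qj1 - pj1 * qj) := by rw [hxx, hyy]; ring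
    rw [h1, hdet]
    linear_combination Q * hu2
  have hV : Q * M - P * N = σ * (xx * d - yy * d1) := by
    linear_combination xx * hr + yy * hr1 + M * hQ.symm - N * hP.symm
  have habs : |Q * M - P * N| = |xx * d - yy * d1| := by
    rw [hV]
    rcases hσ with h | h <;> simp [h, abs_mul] <;> rw [abs_sub_comm]
  rw [habs]
  have hqj1 : 0 < qj1 := lt_trans hQpos hQlt
  rcases eq_or_ne yy 0 with hy0 | hy0
  · rw [hy0] at hQ
    simp only [zero_mul, add_zero] at hQ
    have hxpos : 0 < xx := by nlinarith
    have hx1 : 1 ≤ xx := hxpos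
    rw [hy0]
    have : d ≤ xx * d - 0 * d1 := by nlinarith
    refine le_abs.2 (Or.inl this)
  · rcases eq_or_ne xx 0 with hx0 | hx0
    · exfalso
      rw [hx0] at hQ
      simp only [zero_mul, zero_add] at hQ
      have hypos : 0 < yy := by nlinarith
      have : 1 ≤ yy := hypos
      nlinarith
    · rcases lt_trichotomy xx 0 with hxneg | hxz | hxpos
      · rcases lt_trichotomy yy 0 with hyneg | hyz | hypos
        · exfalso
          have h1 : xx ≤ -1 := by omega
          have h2 : yy ≤ -1 := by omega
          nlinarith
        · exact absurd hyz hy0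
        · have h1 : xx ≤ -1 := by omega
          have h2 : 1 ≤ yy := hypos
          refine le_abs.2 (Or.inr ?_)
          nlinarith
      · exact absurd hxz hx0
      · rcases lt_trichotomy yy 0 with hyneg | hyz | hypos
        · have h1 : 1 ≤ xx := hxpos
          have h2 : yy ≤ -1 := by omega
          refine le_abs.2 (Or.inl ?_)
          nlinarith
        · exact absurd hyz hy0
        · exfalso
          have h1 : 1 ≤ xx := hxpos
          have h2 : 1 ≤ yy := hypos
          nlinarith

/-- Summary of the continued-fraction facts used in the main theorem. -/
lemma CF_main (n m : ℕ) (hn : 0 < n) (hnm : n < m) (j : ℕ) (a' : ℕ) (pq pq' : ℕ × ℕ)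
    (ha' : (cfQuots n m)[j+1]? = some a')
    (h0 : (convergents n m)[j]? = some pq)
    (h1 : (convergents n m)[j+1]? = some pq') :
    0 < pq.2 ∧ pq.2 ≤ pq'.2 ∧ pq'.2 ≤ (a' + 1) * pq.2 ∧
    (∀ P Q : ℕ, 0 < Q → Q < pq'.2 →
      (n : ℤ) ≤ ((pq.2 : ℤ) + (pq'.2 : ℤ)) * |(Q : ℤ) * m - (P : ℤ) * n|) := by
  have hInv : CFInv n m n m 1 (0, 1) (1, 0) := by
    refine ⟨Or.inl rfl, hnm, by simp, by simp, by simp, by simp, by simp⟩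
  have H0 := cf_master n m n hn m 1 (0,1) (1,0) hInv j pq h0
  have H1 := cf_master n m n hn m 1 (0,1) (1,0) hInv (j+1) pq' h1
  obtain ⟨hres0, hq0, hpair⟩ := H0
  obtain ⟨hres1, hq1, -⟩ := H1
  obtain ⟨hmono, hbnd, hK, ⟨u, hu, hdet⟩, hdec⟩ := hpair pq' h1
  refine ⟨hq0, hmono, hbnd a' ha', ?_⟩
  intro P Q hQ hQlt
  set d := eR j (n, m) with hd
  set d1 := eR (j+1) (n, m) with hd1
  have hdle : d ≤ |(Q : ℤ) * m - (P : ℤ) * n| := by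
    refine bestapprox n m pq.1 pq.2 pq'.1 pq'.2 d d1 ((-1)^j) u ?_ hu
      (by positivity) (by positivity) ?_ ?_ hdet (by exact_mod_cast hq0) P Q
      (by exact_mod_cast hQ) (by exact_mod_cast hQlt)
    · rcases Nat.even_or_odd j with he | he
      · left; exact (Even.neg_one_pow he)
      · right; exact (Odd.neg_one_pow he)
    · rw [hres0]; ring
    · rw [hres1]; ring
  have hNle : (n : ℤ) ≤ ((pq.2 : ℤ) + pq'.2) * d := by
    have hcast : (pq'.2 : ℤ) * d + (pq.2 : ℤ) * d1 = n := by exact_mod_cast hK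
    have hd1d : (d1 : ℤ) ≤ d := by exact_mod_cast hdec.le
    nlinarith [hq0, hq1]
  calc (n : ℤ) ≤ ((pq.2 : ℤ) + pq'.2) * d := hNle
    _ ≤ ((pq.2 : ℤ) + pq'.2) * |(Q : ℤ) * m - (P : ℤ) * n| := by
        have : (0 : ℤ) ≤ (pq.2 : ℤ) + pq'.2 := by positivity
        exact mul_le_mul_of_nonneg_left hdle this
end CF2

section Chern

lemma choose_le_two_pow' (k u : ℕ) : (k.choose u) ≤ 2 ^ k := by
  rcases le_or_gt u k with h | h
  · calc k.choose u ≤ ∑ i ∈ Finset.range (k+1), k.choose i :=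
        Finset.single_le_sum (fun i _ => Nat.zero_le _) (Finset.mem_range.2 (by omega))
      _ = 2 ^ k := Nat.sum_range_choose k
  · rw [Nat.choose_eq_zero_of_lt h]; exact Nat.zero_le _

lemma chern_descent (k : ℕ) (hk : 0 < k) :
    ∀ t, t ≤ k / 2 →
      (k.choose (k / 2 - t) : ℝ) ≤ 2 ^ k * Real.exp (-(t * (t - 1)) / k) := by
  intro t
  induction t with
  | zero =>
    intro _
    simp only [Nat.cast_zero, zero_mul, neg_zero, zero_div, Real.exp_zero, mul_one]
    exact_mod_cast choose_le_two_pow' k (k/2)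
  | succ t ih =>
    intro ht
    have ht' : t ≤ k / 2 := by omega
    have H := ih ht'
    set u := k / 2 - (t + 1) with hu
    have hu1 : u + 1 = k / 2 - t := by omega
    have huk : u < k := by omega
    have hid : k.choose (u+1) * (u+1) = k.choose u * (k - u) := Nat.choose_succ_right_eq k u
    have hkpos : (0:ℝ) < k := by exact_mod_cast hk
    have hkd2 : 2 * (k/2) ≤ k := Nat.div_mul_le_self k 2 |>.trans_eq (by ring) |> fun _ => by
      omega
    -- ratio bound : (u+1) ≤ (k - u) * exp(-2t/k)  is what we need in multiplied form
    have hden : (0:ℝ) < (k - u : ℕ) := by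
      have : 0 < k - u := by omega
      exact_mod_cast this
    have hCu : (k.choose u : ℝ) = (k.choose (u+1) : ℝ) * (u+1) / (k - u : ℕ) := by
      have := hid
      have hcast : (k.choose (u+1) : ℝ) * (u+1) = (k.choose u : ℝ) * ((k - u : ℕ) : ℝ) := by
        exact_mod_cast congrArg (Nat.cast : ℕ → ℝ) hid
      field_simp
      linarith [hcast]
    have hku : ((k - u : ℕ) : ℝ) = (k:ℝ) - u := by
      have : u ≤ k := huk.le
      push_cast [this]
      ring
    have h2u : (u:ℝ) + 1 = ((k/2 : ℕ):ℝ) - t := by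
      have : u + 1 + t = k/2 := by omega
      have := congrArg (Nat.cast : ℕ → ℝ) this
      push_cast at this
      linarith
    have hk2a : 2 * ((k/2 : ℕ):ℝ) ≤ (k:ℝ) := by
      exact_mod_cast (by omega : 2 * (k/2) ≤ k)
    have htpos : (0:ℝ) ≤ (t:ℝ) := by positivity
    have hunn : (0:ℝ) ≤ (u:ℝ) := by positivity
    have hratio : ((u:ℝ)+1) / ((k - u : ℕ) : ℝ) ≤ Real.exp (-(2*t)/k) := by
      have hx : -(2*(t:ℝ))/k + 1 ≤ Real.exp (-(2*t)/k) := by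
        have := Real.add_one_le_exp (-(2*(t:ℝ))/k)
        linarith
      have key : ((u:ℝ)+1) * k ≤ ((k:ℝ) - 2*t) * ((k:ℝ) - u) := by
        nlinarith [mul_nonneg htpos hunn,
          mul_nonneg hkpos.le (by linarith : (0:ℝ) ≤ (k:ℝ) - 2*((k/2:ℕ):ℝ))]
      have hineq : ((u:ℝ)+1) / ((k - u : ℕ) : ℝ) ≤ ((k:ℝ) - 2*t)/k := by
        rw [hku, div_le_div_iff₀ (by linarith [hku, hden]) hkpos]
        exact key
      have heq : ((k:ℝ) - 2*t)/k = 1 - 2*t/k := by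
        field_simp
      calc ((u:ℝ)+1) / ((k - u : ℕ) : ℝ) ≤ ((k:ℝ) - 2*t)/k := hineq
        _ = 1 - 2*(t:ℝ)/k := heq
        _ ≤ Real.exp (-(2*t)/k) := by
            have : -(2*(t:ℝ))/k = -(2*(t:ℝ)/k) := by ring
            rw [this] at hx ⊢
            linarith
    rw [← hu1] at H
    calc (k.choose u : ℝ)
        = (k.choose (u+1) : ℝ) * (((u:ℝ)+1) / ((k - u : ℕ) : ℝ)) := by
          rw [hCu]; ring
      _ ≤ (2 ^ k * Real.exp (-(t * (t - 1)) / k)) * Real.exp (-(2*t)/k) := by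
          apply mul_le_mul H hratio (by positivity) (by positivity)
      _ = 2 ^ k * Real.exp (-((t:ℝ)+1) * (((t:ℝ)+1) - 1) / k) := by
          rw [mul_assoc, ← Real.exp_add]
          congr 1
          field_simp
          ring
      _ = 2 ^ k * Real.exp (-(((t+1 : ℕ):ℝ) * (((t+1 : ℕ):ℝ) - 1)) / k) := by
          push_cast
          ring_nf

/-- Chernoff-type bound: `C(k,h) / 2^k ≤ exp(-s²/(16k))` when `|2h - k| ≥ s ≥ 6`. -/
lemma chernoff (k h s : ℕ) (hk : 0 < k) (hh : h ≤ k) (hs6 : 6 ≤ s)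
    (hs : (s : ℤ) ≤ |2 * (h:ℤ) - k|) :
    (k.choose h : ℝ) / 2 ^ k ≤ Real.exp (-(s:ℝ)^2 / (16 * k)) := by
  -- reduce to u = min h (k-h)
  set u := min h (k - h) with hudef
  have hCu : k.choose h = k.choose u := by
    rcases le_total h (k - h) with hle | hle
    · rw [hudef, min_eq_left hle]
    · rw [hudef, min_eq_right hle, ← Nat.choose_symm hh]
  have hs' : s ≤ k - 2 * u := by
    have h1 : (s:ℤ) ≤ |2 * (h:ℤ) - k| := hs
    have h2 : |2 * (h:ℤ) - k| = (k:ℤ) - 2 * u := by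
      rcases le_total (2*h) k with hle | hle
      · rw [abs_of_nonpos (by push_cast; omega)]
        have : u = h := by omega
        push_cast [this]; ring
      · rw [abs_of_nonneg (by push_cast; omega)]
        have : u = k - h := by omega
        push_cast [this, Nat.cast_sub hh]; ring
    omega
  have hu2 : u ≤ k / 2 := by omega
  set t := k / 2 - u with htdef
  have hut : u = k / 2 - t := by omega
  have H := chern_descent k hk t (by omega)
  rw [← hut] at H
  have hts : s ≤ 2 * t + 1 := by omega
  have hkpos : (0:ℝ) < k := by exact_mod_cast hk
  have hexp : Real.exp (-((t:ℝ) * ((t:ℝ) - 1)) / k) ≤ Real.exp (-(s:ℝ)^2 / (16 * k)) := by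
    apply Real.exp_le_exp.2
    have hts' : (s:ℝ) ≤ 2*(t:ℝ) + 1 := by exact_mod_cast hts
    have hs6' : (6:ℝ) ≤ s := by exact_mod_cast hs6
    have hfact : (s:ℝ)^2 ≤ 16*(t:ℝ)*((t:ℝ)-1) := by
      have hmm : (0:ℝ) ≤ (t - ((s:ℝ)-1)/2) * (t + ((s:ℝ)-1)/2 - 1) := by
        apply mul_nonneg <;> nlinarith
      nlinarith [sq_nonneg ((s:ℝ)-6)]
    have hmain : (s:ℝ)^2 / (16*k) ≤ ((t:ℝ)*((t:ℝ)-1)) / k := by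
      rw [div_le_div_iff₀ (by positivity) hkpos]
      nlinarith [hkpos]
    have e1 : -((t:ℝ) * ((t:ℝ) - 1)) / (k:ℝ) = -(((t:ℝ) * ((t:ℝ) - 1)) / k) := by ring
    have e2 : -(s:ℝ)^2 / (16 * k) = -((s:ℝ)^2 / (16 * k)) := by ring
    rw [e1, e2]
    linarith
  have h2k : (0:ℝ) < 2 ^ k := by positivity
  rw [div_le_iff₀ h2k]
  calc (k.choose h : ℝ) = (k.choose u : ℝ) := by rw [hCu]
    _ ≤ 2 ^ k * Real.exp (-((t:ℝ) * ((t:ℝ) - 1)) / k) := H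
    _ ≤ 2 ^ k * Real.exp (-(s:ℝ)^2 / (16 * k)) := by
        apply mul_le_mul_of_nonneg_left hexp (by positivity)
    _ = Real.exp (-(s:ℝ)^2 / (16 * k)) * 2 ^ k := by ring

end Chern

section Count

open Finset

lemma ncard_biUnion_le {α ι : Type*} [Fintype α] (s : Finset ι) (A : ι → Set α) :
    (⋃ i ∈ s, A i).ncard ≤ ∑ i ∈ s, (A i).ncard := by
  classical
  induction s using Finset.induction with
  | empty => simp
  | insert _ _ hnotmem ih =>
    rename_i a s'
    rw [Finset.set_biUnion_insert, Finset.sum_insert hnotmem]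
    exact le_trans (Set.ncard_union_le _ _) (by omega)

lemma ncard_cylinder {α ι : Type*} [Fintype α] [DecidableEq α] [Fintype ι]
    (P : ι → α) (hP : Function.Injective P) (v : ι → Bool) :
    ({ω : α → Bool | ∀ i, ω (P i) = v i}).ncard = 2 ^ (Fintype.card α - Fintype.card ι) := by
  classical
  rw [← Nat.card_coe_set_eq]
  have e : ({ω : α → Bool | ∀ i, ω (P i) = v i} : Set (α → Bool)) ≃
      (((Set.range P)ᶜ : Set α) → Bool) := by
    refine ⟨fun ω a => ω.1 a.1, fun g => ⟨fun a =>
      if h : a ∈ Set.range P then v h.choose else g ⟨a, h⟩, ?_⟩, ?_, ?_⟩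
    · intro i
      have h : P i ∈ Set.range P := ⟨i, rfl⟩
      simp only [h, dif_pos]
      congr 1
      exact hP h.choose_spec
    · intro ω
      ext a
      by_cases h : a ∈ Set.range P
      · simp only [h, dif_pos]
        have hs := h.choose_spec
        have := ω.2 h.choose
        rw [hs] at this
        exact this.symm
      · simp only [h, dif_neg, not_false_iff]
    · intro g
      ext a
      have h : a.1 ∉ Set.range P := a.2
      simp only [h, dif_neg, not_false_iff]
  rw [Nat.card_congr e]
  rw [Nat.card_eq_fintype_card]
  rw [Fintype.card_fun]
  have h1 : Fintype.card ((Set.range P)ᶜ : Set α) = Fintype.card α - Fintype.card (Set.range P) :=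
    Fintype.card_compl_set _
  have h2 : Fintype.card (Set.range P) = Fintype.card ι := Set.card_range_of_injective hP
  rw [h1, h2, Fintype.card_bool]

end Count

section Path

variable {n m : ℕ}

/-- Deterministic path from `z` driven by bits `b`. -/
def pathW (z : Torus n m) (b : ℕ → Bool) : ℕ → Torus n m
  | 0 => z
  | (i+1) => if b i then ((pathW z b i).1 + 1, (pathW z b i).2)
             else ((pathW z b i).1, (pathW z b i).2 + 1)

/-- Extension of a `Fin k`-indexed bit vector by `false`. -/
def extB {k : ℕ} (b : Fin k → Bool) : ℕ → Bool :=
  fun i => if h : i < k then b ⟨i, h⟩ else false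

/-- Number of `true` bits among the first `i`. -/
def cnt (b : ℕ → Bool) (i : ℕ) : ℕ := ((Finset.range i).filter (fun t => b t = true)).card

lemma cnt_le (b : ℕ → Bool) (i : ℕ) : cnt b i ≤ i := by
  calc cnt b i ≤ (Finset.range i).card := Finset.card_filter_le _ _
    _ = i := Finset.card_range i

lemma cnt_succ (b : ℕ → Bool) (i : ℕ) :
    cnt b (i+1) = cnt b i + (if b i then 1 else 0) := by
  unfold cnt
  rw [Finset.range_add_one, Finset.filter_insert]
  by_cases hb : b i = true
  · rw [if_pos hb, Finset.card_insert_of_notMem (by simp), if_pos (by simpa using hb)]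
  · rw [if_neg hb, if_neg (by simpa using hb)]
    omega

lemma pathW_eq (z : Torus n m) (b : ℕ → Bool) (i : ℕ) :
    pathW z b i = (z.1 + (cnt b i : ZMod n), z.2 + ((i - cnt b i : ℕ) : ZMod m)) := by
  induction i with
  | zero => simp [pathW, cnt]
  | succ i ih =>
    have hle := cnt_le b i
    by_cases hb : b i
    · rw [show pathW z b (i+1) = ((pathW z b i).1 + 1, (pathW z b i).2) by rw [pathW, if_pos hb]]
      rw [ih, cnt_succ, if_pos hb]
      have h2 : i + 1 - (cnt b i + 1) = i - cnt b i := by omega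
      rw [h2]
      push_cast
      simp [add_assoc]
    · rw [show pathW z b (i+1) = ((pathW z b i).1, (pathW z b i).2 + 1) by rw [pathW, if_neg hb]]
      rw [ih, cnt_succ, if_neg hb]
      have h2 : i + 1 - (cnt b i + 0) = (i - cnt b i) + 1 := by omega
      rw [h2]
      push_cast
      simp [add_assoc]

lemma pathW_orbit (ω : Torus n m → Bool) (z : Torus n m) {k : ℕ}
    (b : Fin k → Bool) (hb : ∀ i : Fin k, b i = ω ((step ω)^[i.1] z)) :
    ∀ i, i ≤ k → pathW z (extB b) i = (step ω)^[i] z := by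
  intro i
  induction i with
  | zero => intro _; rfl
  | succ i ih =>
    intro hik
    have hi : i < k := hik
    have hext : extB b i = ω ((step ω)^[i] z) := by
      rw [extB, dif_pos hi, hb ⟨i, hi⟩]
    have hpi : pathW z (extB b) i = (step ω)^[i] z := ih (by omega)
    have hωe : extB b i = ω (pathW z (extB b) i) := by rw [hpi]; exact hext
    rw [Function.iterate_succ_apply', ← hpi]
    by_cases hω : ω (pathW z (extB b) i)
    · have hbt : extB b i = true := by rw [hωe]; exact hω
      rw [show pathW z (extB b) (i+1) = ((pathW z (extB b) i).1 + 1, (pathW z (extB b) i).2) by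
        rw [pathW, if_pos hbt]]
      rw [step, if_pos hω]
    · have hbt : ¬ (extB b i = true) := by rw [hωe]; exact hω
      rw [show pathW z (extB b) (i+1) = ((pathW z (extB b) i).1, (pathW z (extB b) i).2 + 1) by
        rw [pathW, if_neg hbt]]
      rw [step, if_neg hω]

/-- Witness predicate : an injective closed-path candidate with the right step counts. -/
def Wit (n m k : ℕ) (z : Torus n m) (b : Fin k → Bool) : Prop :=
  Function.Injective (fun i : Fin k => pathW z (extB b) i.1) ∧
  n ∣ cnt (extB b) k ∧ m ∣ (k - cnt (extB b) k)

lemma witness_of_cycle [NeZero n] [NeZero m] (ω : Torus n m → Bool) (Cy : Set (Torus n m))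
    (hCy : Cy ∈ cycles ω) (L : ℕ) (hL : Cy.ncard ≤ L) :
    ∃ k, 1 ≤ k ∧ k ≤ L ∧ ∃ z : Torus n m, ∃ b : Fin k → Bool,
      Wit n m k z b ∧ ∀ i : Fin k, ω (pathW z (extB b) i.1) = b i := by
  obtain ⟨z, hz, rfl⟩ := hCy
  set f := step ω with hf
  set k := Function.minimalPeriod f z with hk
  have hkpos : 0 < k := Function.minimalPeriod_pos_of_mem_periodicPts hz
  have hOeq : {w | ∃ i : ℕ, f^[i] z = w} = (fun i => f^[i] z) '' (Set.Iio k) := by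
    ext w
    constructor
    · rintro ⟨i, rfl⟩
      exact ⟨i % k, Nat.mod_lt _ hkpos, Function.iterate_mod_minimalPeriod_eq⟩
    · rintro ⟨i, _, rfl⟩
      exact ⟨i, rfl⟩
  have hncard : ({w | ∃ i : ℕ, f^[i] z = w}).ncard = k := by
    rw [hOeq, Set.ncard_image_of_injOn (Function.iterate_injOn_Iio_minimalPeriod),
      ← Finset.coe_range, Set.ncard_coe_finset, Finset.card_range]
  refine ⟨k, hkpos, by rw [← hncard]; exact hL, z, fun i => ω (f^[i.1] z), ?_, ?_⟩
  · have hpath : ∀ i : Fin k, pathW z (extB (fun i : Fin k => ω (f^[i.1] z))) i.1 = f^[i.1] z :=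
      fun i => pathW_orbit ω z _ (fun _ => rfl) i.1 i.2.le
    refine ⟨?_, ?_, ?_⟩
    · intro i j hij
      have hij2 : pathW z (extB (fun i : Fin k => ω (f^[i.1] z))) i.1
          = pathW z (extB (fun i : Fin k => ω (f^[i.1] z))) j.1 := hij
      rw [hpath i, hpath j] at hij2
      exact Fin.ext (Function.iterate_injOn_Iio_minimalPeriod i.2 j.2 hij2)
    · have hclose : pathW z (extB (fun i : Fin k => ω (f^[i.1] z))) k = z := by
        rw [pathW_orbit ω z _ (fun _ => rfl) k le_rfl, hk, Function.iterate_minimalPeriod]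
      rw [pathW_eq] at hclose
      have h1 : z.1 + ((cnt (extB (fun i : Fin k => ω (f^[i.1] z))) k : ℕ) : ZMod n) = z.1 := by
        exact congrArg Prod.fst hclose
      have h2 : ((cnt (extB (fun i : Fin k => ω (f^[i.1] z))) k : ℕ) : ZMod n) = 0 := by
        have := add_eq_left.1 h1
        exact this
      exact (ZMod.natCast_eq_zero_iff _ n).1 h2
    · have hclose : pathW z (extB (fun i : Fin k => ω (f^[i.1] z))) k = z := by
        rw [pathW_orbit ω z _ (fun _ => rfl) k le_rfl, hk, Function.iterate_minimalPeriod]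
      rw [pathW_eq] at hclose
      have h1 := congrArg Prod.snd hclose
      simp only at h1
      have h2 : (((k - cnt (extB (fun i : Fin k => ω (f^[i.1] z))) k : ℕ)) : ZMod m) = 0 :=
        add_eq_left.1 h1
      exact (ZMod.natCast_eq_zero_iff _ m).1 h2
  · intro i
    rw [pathW_orbit ω z _ (fun _ => rfl) i.1 i.2.le]

/-- Weight-count version of the binomial bound. -/
lemma card_weight_le {k h : ℕ} :
    (Finset.univ.filter (fun b : Fin k → Bool => cnt (extB b) k = h)).card ≤ k.choose h := by
  classical
  have := Finset.card_le_card_of_injOn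
    (s := Finset.univ.filter (fun b : Fin k → Bool => cnt (extB b) k = h))
    (f := fun b : Fin k → Bool => (Finset.range k).filter (fun t => extB b t = true))
    (t := Finset.powersetCard h (Finset.range k))
    ?_ ?_
  · calc _ ≤ (Finset.powersetCard h (Finset.range k)).card := this
      _ = (Finset.range k).card.choose h := Finset.card_powersetCard _ _
      _ = k.choose h := by rw [Finset.card_range]
  · intro b hb
    rw [Finset.mem_coe, Finset.mem_filter] at hb
    rw [Finset.mem_coe, Finset.mem_powersetCard]
    exact ⟨Finset.filter_subset _ _, hb.2⟩
  · intro b1 h1 b2 h2 heq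
    simp only at heq
    funext i
    have hmem : (i.1 ∈ (Finset.range k).filter (fun t => extB b1 t = true)) =
        (i.1 ∈ (Finset.range k).filter (fun t => extB b2 t = true)) := by rw [heq]
    simp only [Finset.mem_filter, Finset.mem_range] at hmem
    have e1 : extB b1 i.1 = b1 i := by rw [extB, dif_pos i.2]
    have e2 : extB b2 i.1 = b2 i := by rw [extB, dif_pos i.2]
    have hi : i.1 < k := i.2
    cases hb1 : b1 i <;> cases hb2 : b2 i <;> simp_all

end Path

section Core

open Finset

lemma cardTorus (n m : ℕ) [NeZero n] [NeZero m] : Fintype.card (Torus n m) = n * m := by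
  rw [Fintype.card_prod, ZMod.card, ZMod.card]

noncomputable def Wfin (n m k : ℕ) [NeZero n] [NeZero m] :
    Finset (Torus n m × (Fin k → Bool)) := by
  classical exact Finset.univ.filter (fun zb => Wit n m k zb.1 zb.2)

lemma mem_Wfin {n m k : ℕ} [NeZero n] [NeZero m] {zb : Torus n m × (Fin k → Bool)} :
    zb ∈ Wfin n m k ↔ Wit n m k zb.1 zb.2 := by
  classical
  simp [Wfin]

def cylSet (n m k : ℕ) (zb : Torus n m × (Fin k → Bool)) : Set (Torus n m → Bool) :=
  {ω | ∀ i : Fin k, ω (pathW zb.1 (extB zb.2) i.1) = zb.2 i}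

lemma cyl_ncard {n m k : ℕ} [NeZero n] [NeZero m] (zb : Torus n m × (Fin k → Bool))
    (hzb : Wit n m k zb.1 zb.2) :
    (cylSet n m k zb).ncard = 2 ^ (n * m - k) ∧ k ≤ n * m := by
  classical
  have hinj := hzb.1
  constructor
  · have h := ncard_cylinder (P := fun i : Fin k => pathW zb.1 (extB zb.2) i.1) hinj zb.2
    rw [cardTorus, Fintype.card_fin] at h
    exact h
  · have h := Fintype.card_le_of_injective _ hinj
    rw [cardTorus, Fintype.card_fin] at h
    exact h

lemma Wfin_card_le (n m k : ℕ) [NeZero n] [NeZero m] :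
    (Wfin n m k).card ≤
      (n * m) * ∑ h ∈ range (k+1), (if n ∣ h ∧ m ∣ (k-h) then k.choose h else 0) := by
  classical
  set V : Finset (Fin k → Bool) := Finset.univ.filter
    (fun b : Fin k → Bool => n ∣ cnt (extB b) k ∧ m ∣ (k - cnt (extB b) k)) with hV
  have hsub : Wfin n m k ⊆ (Finset.univ : Finset (Torus n m)) ×ˢ V := by
    intro zb hzb
    rw [mem_Wfin] at hzb
    rw [Finset.mem_product]
    exact ⟨Finset.mem_univ _, Finset.mem_filter.2 ⟨Finset.mem_univ _, hzb.2.1, hzb.2.2⟩⟩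
  have h1 : (Wfin n m k).card ≤ (n * m) * V.card := by
    calc (Wfin n m k).card ≤ ((Finset.univ : Finset (Torus n m)) ×ˢ V).card :=
        Finset.card_le_card hsub
      _ = (Finset.univ : Finset (Torus n m)).card * V.card := Finset.card_product _ _
      _ = (n * m) * V.card := by rw [Finset.card_univ, cardTorus]
  refine h1.trans (Nat.mul_le_mul_left _ ?_)
  have hVsub : V ⊆ (range (k+1)).biUnion (fun h => Finset.univ.filter
      (fun b : Fin k → Bool => cnt (extB b) k = h ∧ n ∣ h ∧ m ∣ (k-h))) := by
    intro b hb
    rw [hV, Finset.mem_filter] at hb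
    refine Finset.mem_biUnion.2 ⟨cnt (extB b) k, ?_, ?_⟩
    · exact Finset.mem_range.2 (by have := cnt_le (extB b) k; omega)
    · exact Finset.mem_filter.2 ⟨Finset.mem_univ _, rfl, hb.2.1, hb.2.2⟩
  calc V.card ≤ _ := Finset.card_le_card hVsub
    _ ≤ ∑ h ∈ range (k+1), (Finset.univ.filter
        (fun b : Fin k → Bool => cnt (extB b) k = h ∧ n ∣ h ∧ m ∣ (k-h))).card :=
      Finset.card_biUnion_le
    _ ≤ ∑ h ∈ range (k+1), (if n ∣ h ∧ m ∣ (k-h) then k.choose h else 0) := by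
      refine Finset.sum_le_sum ?_
      intro h _
      by_cases hc : n ∣ h ∧ m ∣ (k-h)
      · rw [if_pos hc]
        refine le_trans (Finset.card_le_card ?_) card_weight_le
        intro b hb
        rw [Finset.mem_filter] at hb ⊢
        exact ⟨hb.1, hb.2.1⟩
      · rw [if_neg hc, Nat.le_zero, Finset.card_eq_zero, Finset.filter_eq_empty_iff]
        intro b _
        rintro ⟨h1, h2, h3⟩
        exact hc ⟨h2, h3⟩

lemma core_bound (n m L : ℕ) [NeZero n] [NeZero m] (B : ℝ) (hB0 : 0 ≤ B)
    (hB : ∀ k h : ℕ, 1 ≤ k → k ≤ L → h ≤ k → n ∣ h → m ∣ (k - h) →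
      ((k.choose h : ℝ) / 2 ^ k) ≤ B) :
    prob (n := n) (m := m) (fun ω => ∃ Cy ∈ cycles ω, Cy.ncard ≤ L)
      ≤ (L : ℝ) * ((L + 1) * ((n * m) * B)) := by
  classical
  set E : Set (Torus n m → Bool) := {ω | ∃ Cy ∈ cycles ω, Cy.ncard ≤ L} with hE
  have hsub : E ⊆ ⋃ k ∈ Finset.Icc 1 L, ⋃ zb ∈ Wfin n m k, cylSet n m k zb := by
    intro ω hω
    obtain ⟨Cy, hCy, hlen⟩ := hω
    obtain ⟨k, hk1, hkL, z, b, hWit, hbit⟩ := witness_of_cycle ω Cy hCy L hlen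
    refine Set.mem_iUnion.2 ⟨k, Set.mem_iUnion.2 ⟨Finset.mem_Icc.2 ⟨hk1, hkL⟩, ?_⟩⟩
    refine Set.mem_iUnion.2 ⟨(z, b), Set.mem_iUnion.2 ⟨mem_Wfin.2 hWit, ?_⟩⟩
    exact hbit
  have hn1 : E.ncard ≤ ∑ k ∈ Finset.Icc 1 L, ∑ zb ∈ Wfin n m k, (cylSet n m k zb).ncard := by
    refine le_trans (Set.ncard_le_ncard hsub (Set.toFinite _)) ?_
    refine le_trans (ncard_biUnion_le _ _) ?_
    exact Finset.sum_le_sum (fun k _ => ncard_biUnion_le _ _)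
  -- real-valued estimate of the inner sums
  have hkey : ∀ k ∈ Finset.Icc 1 L,
      ((∑ zb ∈ Wfin n m k, (cylSet n m k zb).ncard : ℕ) : ℝ)
        ≤ 2 ^ (n*m) * ((n * m : ℕ) * ((k+1) * B)) := by
    intro k hk
    rw [Finset.mem_Icc] at hk
    rcases (Wfin n m k).eq_empty_or_nonempty with hWe | hWne
    · rw [hWe]
      simp only [Finset.sum_empty, Nat.cast_zero]
      positivity
    · obtain ⟨zb0, hzb0⟩ := hWne
      have hkm : k ≤ n * m := (cyl_ncard zb0 (mem_Wfin.1 hzb0)).2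
      have hsum : (∑ zb ∈ Wfin n m k, (cylSet n m k zb).ncard)
          = (Wfin n m k).card * 2 ^ (n*m - k) := by
        rw [Finset.sum_congr rfl (fun zb hzb => (cyl_ncard zb (mem_Wfin.1 hzb)).1)]
        rw [Finset.sum_const, smul_eq_mul]
      rw [hsum, Nat.cast_mul, Nat.cast_pow, Nat.cast_ofNat]
      have hpow : (2:ℝ) ^ (n*m - k) = 2 ^ (n*m) / 2 ^ k := by
        rw [eq_div_iff (by positivity), ← pow_add]
        congr 1
        omega
      rw [hpow]
      have hcard : ((Wfin n m k).card : ℝ) ≤ (n*m : ℕ) *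
          ∑ h ∈ range (k+1), ((if n ∣ h ∧ m ∣ (k-h) then k.choose h else 0 : ℕ) : ℝ) := by
        exact_mod_cast Wfin_card_le n m k
      have hterm : ∑ h ∈ range (k+1), ((if n ∣ h ∧ m ∣ (k-h) then k.choose h else 0 : ℕ) : ℝ) / 2^k
          ≤ (k+1) * B := by
        calc ∑ h ∈ range (k+1), ((if n ∣ h ∧ m ∣ (k-h) then k.choose h else 0 : ℕ) : ℝ) / 2^k
            ≤ ∑ h ∈ range (k+1), B := by
              refine Finset.sum_le_sum ?_
              intro h hh
              rw [Finset.mem_range] at hh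
              by_cases hc : n ∣ h ∧ m ∣ (k-h)
              · rw [if_pos hc]
                exact hB k h hk.1 hk.2 (by omega) hc.1 hc.2
              · rw [if_neg hc]
                simp only [Nat.cast_zero, zero_div]
                exact hB0
          _ = (k+1) * B := by rw [Finset.sum_const, card_range, nsmul_eq_mul]; push_cast; ring
      have h2k : (0:ℝ) < 2 ^ k := by positivity
      calc ((Wfin n m k).card : ℝ) * (2 ^ (n*m) / 2 ^ k)
          = (((Wfin n m k).card : ℝ) / 2^k) * 2 ^ (n*m) := by ring
        _ ≤ (((n*m : ℕ) : ℝ) * ((k+1) * B)) * 2 ^ (n*m) := by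
            refine mul_le_mul_of_nonneg_right ?_ (by positivity)
            rw [div_le_iff₀ h2k]
            calc ((Wfin n m k).card : ℝ)
                ≤ (n*m : ℕ) * ∑ h ∈ range (k+1),
                    ((if n ∣ h ∧ m ∣ (k-h) then k.choose h else 0 : ℕ) : ℝ) := hcard
              _ = ((n*m : ℕ) : ℝ) * (∑ h ∈ range (k+1),
                    ((if n ∣ h ∧ m ∣ (k-h) then k.choose h else 0 : ℕ) : ℝ) / 2^k) * 2^k := by
                  rw [← Finset.sum_div]
                  field_simp
              _ ≤ ((n*m : ℕ) : ℝ) * ((k+1) * B) * 2^k := by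
                  refine mul_le_mul_of_nonneg_right ?_ (by positivity)
                  exact mul_le_mul_of_nonneg_left hterm (by positivity)
        _ = 2 ^ (n*m) * ((n*m : ℕ) * ((k+1) * B)) := by ring
  -- put it together
  have h2nm : (0:ℝ) < 2 ^ (n*m) := by positivity
  have : prob (n := n) (m := m) (fun ω => ∃ Cy ∈ cycles ω, Cy.ncard ≤ L)
      = (E.ncard : ℝ) / 2 ^ (n*m) := rfl
  rw [this, div_le_iff₀ h2nm]
  calc (E.ncard : ℝ)
      ≤ ((∑ k ∈ Finset.Icc 1 L, ∑ zb ∈ Wfin n m k, (cylSet n m k zb).ncard : ℕ) : ℝ) := by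
        exact_mod_cast hn1
    _ = ∑ k ∈ Finset.Icc 1 L,
        ((∑ zb ∈ Wfin n m k, (cylSet n m k zb).ncard : ℕ) : ℝ) := by
        rw [Nat.cast_sum]
    _ ≤ ∑ k ∈ Finset.Icc 1 L, 2 ^ (n*m) * ((n * m : ℕ) * ((k+1) * B)) :=
        Finset.sum_le_sum hkey
    _ ≤ ∑ k ∈ Finset.Icc 1 L, 2 ^ (n*m) * ((n * m : ℕ) * ((L+1) * B)) := by
        refine Finset.sum_le_sum ?_
        intro k hk
        rw [Finset.mem_Icc] at hk
        have : ((k:ℝ)+1) ≤ (L:ℝ)+1 := by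
          have := hk.2
          exact_mod_cast by omega
        refine mul_le_mul_of_nonneg_left ?_ (by positivity)
        refine mul_le_mul_of_nonneg_left ?_ (by positivity)
        exact mul_le_mul_of_nonneg_right this hB0
    _ = (Finset.Icc 1 L).card * (2 ^ (n*m) * ((n * m : ℕ) * ((L+1) * B))) := by
        rw [Finset.sum_const, nsmul_eq_mul]
    _ ≤ (L:ℝ) * (2 ^ (n*m) * ((n * m : ℕ) * ((L+1) * B))) := by
        refine mul_le_mul_of_nonneg_right ?_ (by positivity)
        have hIcc : L + 1 - 1 = L := by omega
        rw [Nat.card_Icc, hIcc]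
    _ = (L : ℝ) * ((L + 1) * ((n * m) * B)) * 2 ^ (n*m) := by push_cast; ring
end Core

section Main

lemma prob_mono {n m : ℕ} [NeZero n] [NeZero m] {A A' : (Torus n m → Bool) → Prop}
    (h : ∀ ω, A ω → A' ω) : prob A ≤ prob A' := by
  unfold prob
  have hle : ({ω | A ω} : Set (Torus n m → Bool)).ncard ≤ ({ω | A' ω} : Set (Torus n m → Bool)).ncard :=
    Set.ncard_le_ncard (fun ω hω => h ω hω) (Set.toFinite _)
  have h2 : (0:ℝ) < 2 ^ (n*m) := by positivity
  exact (div_le_div_iff_of_pos_right h2).2 (by exact_mod_cast hle)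

set_option maxHeartbeats 1000000 in
lemma perKH (ε : ℝ) (hε : 0 < ε) (n m L : ℕ) (pq pq' : ℕ × ℕ) (a' : ℕ)
    (hn1 : (1:ℝ) ≤ (n:ℝ)) (hn6' : 6 ≤ n) (hnm : n < m)
    (hD24 : (24:ℝ) ≤ (n:ℝ)^((2:ℝ)/3+ε/4)) (hD4 : (n:ℝ)^((2:ℝ)/3+ε/4) ≤ 4*(n:ℝ))
    (hq : (pq.2:ℝ) ≤ (n:ℝ)^((1:ℝ)/3 - ε/2)) (hq' : (n:ℝ)^((1:ℝ)/3-ε/2) < (pq'.2:ℝ))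
    (ha' : (a':ℝ) ≤ (n:ℝ)^(ε/4))
    (hbnd : pq'.2 ≤ (a'+1) * pq.2)
    (happrox : ∀ P Q : ℕ, 0 < Q → Q < pq'.2 →
      (n:ℤ) ≤ ((pq.2:ℤ)+(pq'.2:ℤ)) * |(Q:ℤ)*m - (P:ℤ)*n|)
    (hLr : (L:ℝ) ≤ (n:ℝ)^((4:ℝ)/3-ε)) (hL1 : 1 ≤ L) :
    ∀ k h : ℕ, 1 ≤ k → k ≤ L → h ≤ k → n ∣ h → m ∣ (k - h) →
      ((k.choose h : ℝ) / 2 ^ k) ≤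
        Real.exp (-((((n:ℝ)^((2:ℝ)/3+ε/4)/4))^2) / (16 * L)) := by
  have hnpos : (0:ℝ) < n := by linarith
  set Λ : ℝ := (n:ℝ) ^ ((4:ℝ)/3 - ε) with hΛdef
  set Dr : ℝ := (n:ℝ) ^ ((2:ℝ)/3 + ε/4) / 4 with hDrdef
  have hDr6 : (6:ℝ) ≤ Dr := by rw [hDrdef]; linarith
  have hDr0 : (0:ℝ) < Dr := by linarith
  set B : ℝ := Real.exp (-(Dr^2) / (16 * L)) with hBdef
  have hLrpos : (0:ℝ) < (L:ℝ) := by exact_mod_cast hL1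
  show ∀ k h : ℕ, 1 ≤ k → k ≤ L → h ≤ k → n ∣ h → m ∣ (k - h) →
      ((k.choose h : ℝ) / 2 ^ k) ≤ B
  intro k h hk1 hkL hhk hnh hmkh
  set u : ℕ := min h (k - h) with hudef
  set s : ℕ := k - 2*u with hsdef
  have hsz : (s : ℤ) = |2*(h:ℤ) - (k:ℤ)| := by
    rcases le_total (2*(h:ℤ)) (k:ℤ) with hc | hc
    · rw [abs_of_nonpos (by linarith)]; omega
    · rw [abs_of_nonneg (by linarith)]; omega
  -- establish Dr ≤ s and 6 ≤ s
  have hkey : Dr ≤ (s:ℝ) ∧ 6 ≤ s := by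
    have hDrn : Dr ≤ (n:ℝ) := by rw [hDrdef]; linarith
    rcases Nat.eq_zero_or_pos h with hh0 | hhpos
    · -- h = 0, vertical cycles
      have hmk : m ∣ k := by rw [hh0] at hmkh; simpa using hmkh
      have hkm : m ≤ k := Nat.le_of_dvd (by omega) hmk
      have hsk : s = k := by omega
      constructor
      · rw [hsk]
        calc Dr ≤ (n:ℝ) := hDrn
          _ ≤ (k:ℝ) := by exact_mod_cast (by omega : n ≤ k)
      · omega
    rcases eq_or_lt_of_le hhk with hhk' | hhk'
    · -- h = k, horizontal cycles
      have hnk : n ∣ k := by rw [hhk'] at hnh; exact hnh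
      have hkn : n ≤ k := Nat.le_of_dvd (by omega) hnk
      have hsk : s = k := by omega
      constructor
      · rw [hsk]
        calc Dr ≤ (n:ℝ) := hDrn
          _ ≤ (k:ℝ) := by exact_mod_cast hkn
      · omega
    · -- mixed homology, the continued-fraction case
      set p : ℕ := h / n with hpdef
      set q : ℕ := (k - h) / m with hqdef
      have hhp : p * n = h := Nat.div_mul_cancel hnh
      have hkq : q * m = k - h := Nat.div_mul_cancel hmkh
      have hppos : 0 < p := by
        rcases Nat.eq_zero_or_pos p with h0 | h0
        · rw [h0] at hhp; omega
        · exact h0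
      have hqpos : 0 < q := by
        rcases Nat.eq_zero_or_pos q with h0 | h0
        · rw [h0] at hkq; simp at hkq; omega
        · exact h0
      -- q < pq'.2
      have hqm : (q:ℝ) * n ≤ (k:ℝ) := by
        have hqmk : q * m ≤ k := hkq.trans_le (Nat.sub_le k h)
        have h1 : (q:ℝ) * m ≤ (k:ℝ) := by exact_mod_cast hqmk
        have h2 : (q:ℝ) * n ≤ (q:ℝ) * m := by
          have : (n:ℝ) ≤ m := by exact_mod_cast hnm.le
          have : (0:ℝ) ≤ q := by positivity
          nlinarith
        linarith
      have hsplit : (n:ℝ) ^ ((1:ℝ)/3 - ε) * (n:ℝ) = Λ := by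
        have h0 : (n:ℝ) ^ ((1:ℝ)/3 - ε) * (n:ℝ) ^ (1:ℝ) = Λ := by
          rw [hΛdef, ← Real.rpow_add hnpos]
          congr 1
          ring
        rw [Real.rpow_one] at h0
        exact h0
      have hqle : (q:ℝ) ≤ (n:ℝ) ^ ((1:ℝ)/3 - ε) := by
        have hkΛ : (k:ℝ) ≤ Λ := le_trans (by exact_mod_cast hkL) hLr
        have h1 : (q:ℝ) * n ≤ (n:ℝ) ^ ((1:ℝ)/3 - ε) * (n:ℝ) := by
          rw [hsplit]
          exact hqm.trans hkΛ
        exact le_of_mul_le_mul_right h1 hnpos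
      have hqlt : q < pq'.2 := by
        have h1 : (q:ℝ) < (pq'.2 : ℝ) := by
          refine lt_of_le_of_lt (hqle.trans ?_) hq'
          exact Real.rpow_le_rpow_of_exponent_le hn1 (by linarith)
        exact_mod_cast h1
      have hZ := happrox p q hqpos hqlt
      -- identify s with |q m - p n|
      have hs_eq : (s:ℤ) = |(q:ℤ)*m - (p:ℤ)*n| := by
        rw [hsz]
        have h1 : 2*(h:ℤ) - (k:ℤ) = (p:ℤ)*n - (q:ℤ)*m := by
          have e1 : (h:ℤ) = (p:ℤ)*n := by exact_mod_cast hhp.symm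
          have e2 : ((k - h : ℕ):ℤ) = (q:ℤ)*m := by exact_mod_cast hkq.symm
          omega
        rw [h1, ← abs_neg]
        congr 1
        ring
      have hZr : (n:ℝ) ≤ ((pq.2:ℝ) + (pq'.2:ℝ)) * (s:ℝ) := by
        have : (n:ℤ) ≤ ((pq.2:ℤ) + (pq'.2:ℤ)) * (s:ℤ) := by
          rw [hs_eq]; exact hZ
        exact_mod_cast this
      -- size of the denominators
      set X' : ℝ := (n:ℝ) ^ ((1:ℝ)/3 - ε/4) with hX'def
      have hX'0 : (0:ℝ) < X' := Real.rpow_pos_of_pos hnpos _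
      have hone_le : (1:ℝ) ≤ (n:ℝ) ^ (ε/4) := by
        calc (1:ℝ) = (n:ℝ) ^ (0:ℝ) := (Real.rpow_zero _).symm
          _ ≤ _ := Real.rpow_le_rpow_of_exponent_le hn1 (by positivity)
      have hqjX : (pq.2:ℝ) ≤ X' := by
        refine hq.trans ?_
        exact Real.rpow_le_rpow_of_exponent_le hn1 (by linarith)
      have hqj1X : (pq'.2:ℝ) ≤ 2 * X' := by
        have h1 : (pq'.2:ℝ) ≤ ((a':ℝ) + 1) * (pq.2:ℝ) := by exact_mod_cast hbnd
        have h2 : ((a':ℝ) + 1) ≤ 2 * (n:ℝ)^(ε/4) := by linarith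
        have h3 : (pq.2:ℝ) ≤ (n:ℝ) ^ ((1:ℝ)/3 - ε/2) := hq
        have h4 : (n:ℝ)^(ε/4) * (n:ℝ) ^ ((1:ℝ)/3 - ε/2) = X' := by
          rw [hX'def, ← Real.rpow_add hnpos]
          congr 1
          ring
        have hq2nn : (0:ℝ) ≤ (pq.2:ℝ) := by positivity
        calc (pq'.2:ℝ) ≤ ((a':ℝ) + 1) * (pq.2:ℝ) := h1
          _ ≤ (2 * (n:ℝ)^(ε/4)) * (n:ℝ) ^ ((1:ℝ)/3 - ε/2) := by
              have ha'0 : (0:ℝ) ≤ (a':ℝ) + 1 := by positivity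
              have hx0 : (0:ℝ) ≤ 2 * (n:ℝ)^(ε/4) := by positivity
              nlinarith
          _ = 2 * X' := by rw [mul_assoc, h4]
      have hsum4 : (pq.2:ℝ) + (pq'.2:ℝ) ≤ 4 * X' := by linarith
      have hIdent : X' * ((n:ℝ) ^ ((2:ℝ)/3 + ε/4)) = (n:ℝ) := by
        rw [hX'def, ← Real.rpow_add hnpos]
        rw [show (1:ℝ)/3 - ε/4 + ((2:ℝ)/3 + ε/4) = 1 by ring, Real.rpow_one]
      have hs0 : (0:ℝ) ≤ (s:ℝ) := by positivity
      have hDrS : Dr ≤ (s:ℝ) := by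
        rw [hDrdef]
        have h1 : (n:ℝ) ≤ 4 * X' * (s:ℝ) := by
          have := mul_le_mul_of_nonneg_right hsum4 hs0
          linarith
        nlinarith
      refine ⟨hDrS, ?_⟩
      have : (6:ℝ) ≤ (s:ℝ) := le_trans hDr6 hDrS
      exact_mod_cast this
  obtain ⟨hDrS, hs6⟩ := hkey
  have hch := chernoff k h s (by omega) hhk hs6 (le_of_eq hsz)
  refine hch.trans ?_
  rw [hBdef]
  apply Real.exp_le_exp.2
  have hsq : Dr^2 ≤ (s:ℝ)^2 := by nlinarith
  have hkL' : (k:ℝ) ≤ (L:ℝ) := by exact_mod_cast hkL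
  have hkpos' : (0:ℝ) < k := by exact_mod_cast (by omega : 0 < k)
  have hdd : Dr^2 / (16 * L) ≤ (s:ℝ)^2 / (16 * k) :=
    div_le_div₀ (by positivity) hsq (by positivity) (by linarith)
  rw [neg_div, neg_div]
  exact neg_le_neg hdd

set_option maxHeartbeats 1000000 in
theorem irrational_regime_no_short_cycles' (C : ℝ) (hC : 1 < C) (ε : ℝ) (hε : 0 < ε) :
    ∃ c > 0, ∃ n₀ : ℕ, ∀ n : ℕ, n₀ ≤ n → ∀ m : ℕ, n < m → (m : ℝ) < C * n →
      ∀ j : ℕ, ∀ a a' : ℕ, ∀ pq pq' : ℕ × ℕ,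
        (cfQuots n m)[j]? = some a →
        (cfQuots n m)[j + 1]? = some a' →
        (convergents n m)[j]? = some pq →
        (convergents n m)[j + 1]? = some pq' →
        (pq.2 : ℝ) ≤ (n : ℝ) ^ ((1 : ℝ) / 3 - ε / 2) →
        (n : ℝ) ^ ((1 : ℝ) / 3 - ε / 2) < (pq'.2 : ℝ) →
        (a : ℝ) < (n : ℝ) ^ (ε / 2) →
        (a' : ℝ) ≤ (n : ℝ) ^ (ε / 4) →
        prob (n := n) (m := m)
            (fun ω => ∃ Cy ∈ cycles ω, (Cy.ncard : ℝ) ≤ (n : ℝ) ^ ((4 : ℝ) / 3 - ε)) ≤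
          Real.exp (-c * (n : ℝ) ^ (ε / 2)) := by
  refine ⟨1, one_pos, ?_⟩
  by_cases hε23 : ε ≤ 2/3
  case neg =>
    refine ⟨2, ?_⟩
    intro n hn m hnm hmC j a a' pq pq' h1 h2 h3 h4 hq hq' ha ha'
    exfalso
    obtain ⟨hq0, -, -, -⟩ := CF_main n m (by omega) hnm j a' pq pq' h2 h3 h4
    have hn1 : (1:ℝ) < n := by exact_mod_cast (by omega : 1 < n)
    have hX : (n:ℝ) ^ ((1:ℝ)/3 - ε/2) < 1 :=
      Real.rpow_lt_one_of_one_lt_of_neg hn1 (by linarith)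
    have hge : (1 : ℝ) ≤ (pq.2 : ℝ) := by exact_mod_cast hq0
    linarith
  case pos =>
  have hev : ∀ᶠ x : ℝ in atTop,
      ((2:ℝ) ≤ x ∧ (6:ℝ) ≤ x) ∧ ((24:ℝ) ≤ x ^ ((2:ℝ)/3 + ε/4) ∧ x ^ ((2:ℝ)/3 + ε/4) ≤ 4*x) ∧
      ((512:ℝ) ≤ x ^ ε ∧ Real.log (2*C) + 6 * Real.log x ≤ x ^ (ε/2)) := by
    have e1 : ∀ᶠ x : ℝ in atTop, (2:ℝ) ≤ x := eventually_ge_atTop 2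
    have e2 : ∀ᶠ x : ℝ in atTop, (6:ℝ) ≤ x := eventually_ge_atTop 6
    have e3 : ∀ᶠ x : ℝ in atTop, (24:ℝ) ≤ x ^ ((2:ℝ)/3 + ε/4) :=
      (tendsto_rpow_atTop (by positivity)).eventually_ge_atTop 24
    have e4 : ∀ᶠ x : ℝ in atTop, x ^ ((2:ℝ)/3 + ε/4) ≤ 4*x := by
      filter_upwards [eventually_ge_atTop (1:ℝ)] with x hx
      calc x ^ ((2:ℝ)/3 + ε/4) ≤ x ^ (1:ℝ) :=
            Real.rpow_le_rpow_of_exponent_le hx (by linarith)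
        _ = x := Real.rpow_one x
        _ ≤ 4*x := by linarith
    have e5 : ∀ᶠ x : ℝ in atTop, (512:ℝ) ≤ x ^ ε :=
      (tendsto_rpow_atTop hε).eventually_ge_atTop 512
    have e6 : ∀ᶠ x : ℝ in atTop, Real.log (2*C) + 6 * Real.log x ≤ x ^ (ε/2) := by
      have hlo := isLittleO_log_rpow_atTop (by positivity : (0:ℝ) < ε/2)
      have hbd := hlo.bound (by norm_num : (0:ℝ) < 1/12)
      filter_upwards [hbd,
        (tendsto_rpow_atTop (by positivity : (0:ℝ) < ε/2)).eventually_ge_atTop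
          (2*Real.log (2*C)),
        eventually_ge_atTop (1:ℝ)] with x h1 h2 hx1
      have hlogpos : 0 ≤ Real.log x := Real.log_nonneg hx1
      have hxp : (0:ℝ) ≤ x ^ (ε/2) := Real.rpow_nonneg (by linarith) _
      rw [Real.norm_eq_abs, Real.norm_eq_abs, abs_of_nonneg hlogpos, abs_of_nonneg hxp] at h1
      linarith
    filter_upwards [e1, e2, e3, e4, e5, e6] with x h1 h2 h3 h4 h5 h6
    exact ⟨⟨h1, h2⟩, ⟨h3, h4⟩, ⟨h5, h6⟩⟩
  obtain ⟨x₀, hx₀⟩ := eventually_atTop.1 hev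
  refine ⟨⌈x₀⌉₊, ?_⟩
  intro n hn m hnm hmC j a a' pq pq' hcf1 hcf2 hcv1 hcv2 hq hq' ha ha'
  have hxn : x₀ ≤ (n:ℝ) := le_trans (Nat.le_ceil x₀) (by exact_mod_cast hn)
  obtain ⟨⟨hn2, hn6⟩, ⟨hD24, hD4⟩, ⟨h512, hlog⟩⟩ := hx₀ (n:ℝ) hxn
  have hn2' : 2 ≤ n := by exact_mod_cast hn2
  have hn6' : 6 ≤ n := by exact_mod_cast hn6
  haveI : NeZero n := ⟨by omega⟩
  haveI : NeZero m := ⟨by omega⟩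
  have hnpos : (0:ℝ) < n := by linarith
  have hn1 : (1:ℝ) ≤ n := by linarith
  obtain ⟨hq0, hmono, hbnd, happrox⟩ := CF_main n m (by omega) hnm j a' pq pq' hcf2 hcv1 hcv2
  set Λ : ℝ := (n:ℝ) ^ ((4:ℝ)/3 - ε) with hΛdef
  set L : ℕ := ⌊Λ⌋₊ with hLdef
  have hΛ1 : (1:ℝ) ≤ Λ := by
    rw [hΛdef]
    calc (1:ℝ) = (n:ℝ) ^ (0:ℝ) := (Real.rpow_zero _).symm
      _ ≤ (n:ℝ) ^ ((4:ℝ)/3 - ε) := Real.rpow_le_rpow_of_exponent_le hn1 (by linarith)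
  have hΛ0 : (0:ℝ) < Λ := by linarith
  have hL1 : 1 ≤ L := Nat.le_floor (by exact_mod_cast hΛ1)
  have hLr : (L:ℝ) ≤ Λ := Nat.floor_le hΛ0.le
  have hLrpos : (0:ℝ) < L := by exact_mod_cast hL1
  set Dr : ℝ := (n:ℝ) ^ ((2:ℝ)/3 + ε/4) / 4 with hDrdef
  have hDr6 : (6:ℝ) ≤ Dr := by rw [hDrdef]; linarith
  have hDr0 : (0:ℝ) < Dr := by linarith
  set B : ℝ := Real.exp (-(Dr^2) / (16 * L)) with hBdef
  have hB0 : (0:ℝ) ≤ B := (Real.exp_pos _).le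
  -- the per-(k,h) bound
  have hBbound : ∀ k h : ℕ, 1 ≤ k → k ≤ L → h ≤ k → n ∣ h → m ∣ (k - h) →
      ((k.choose h : ℝ) / 2 ^ k) ≤ B := by
    have hLr' : (L:ℝ) ≤ (n:ℝ)^((4:ℝ)/3-ε) := by rw [hΛdef] at hLr; exact hLr
    rw [hBdef, hDrdef]
    exact perKH ε hε n m L pq pq' a' hn1 hn6' hnm hD24 hD4 hq hq' ha' hbnd happrox
      hLr' hL1
  -- apply the core bound
  have hcore := core_bound n m L B hB0 hBbound
  have hstep : prob (n := n) (m := m)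
      (fun ω => ∃ Cy ∈ cycles ω, (Cy.ncard : ℝ) ≤ (n : ℝ) ^ ((4 : ℝ) / 3 - ε))
      ≤ prob (n := n) (m := m) (fun ω => ∃ Cy ∈ cycles ω, Cy.ncard ≤ L) := by
    apply prob_mono
    intro ω hω
    obtain ⟨Cy, h1, h2⟩ := hω
    exact ⟨Cy, h1, Nat.le_floor h2⟩
  refine (hstep.trans hcore).trans ?_
  -- final numeric estimate
  have hsq2 : (n:ℝ) ^ ((4:ℝ)/3 - ε) ≤ (n:ℝ)^(2:ℕ) := by
    calc (n:ℝ) ^ ((4:ℝ)/3 - ε) ≤ (n:ℝ) ^ ((2:ℕ):ℝ) :=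
        Real.rpow_le_rpow_of_exponent_le hn1 (by push_cast; linarith)
      _ = (n:ℝ)^(2:ℕ) := Real.rpow_natCast _ 2
  have hA1 : (L:ℝ) ≤ (n:ℝ)^(2:ℕ) := hLr.trans hsq2
  have hA2 : (L:ℝ) + 1 ≤ 2 * (n:ℝ)^(2:ℕ) := by
    have h1 : (1:ℝ) ≤ (n:ℝ)^(2:ℕ) := by
      calc (1:ℝ) = 1^(2:ℕ) := by norm_num
        _ ≤ (n:ℝ)^(2:ℕ) := pow_le_pow_left₀ (by norm_num) hn1 2
    linarith
  have hA3 : ((n:ℝ) * (m:ℝ)) ≤ C * (n:ℝ)^(2:ℕ) := by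
    have hm' : (m:ℝ) ≤ C * n := le_of_lt hmC
    calc (n:ℝ) * m ≤ (n:ℝ) * (C * n) := mul_le_mul_of_nonneg_left hm' (by positivity)
      _ = C * (n:ℝ)^(2:ℕ) := by ring
  have hC0 : (0:ℝ) < C := by linarith
  have hchain : (L : ℝ) * ((L + 1) * ((n * m) * B))
      ≤ 2 * C * (n:ℝ)^(6:ℕ) * B := by
    have hnm0 : (0:ℝ) ≤ ((n*m:ℕ):ℝ) := by positivity
    have hL0 : (0:ℝ) ≤ (L:ℝ) := by positivity
    have e1 : ((n:ℝ)^(2:ℕ)) * (2 * (n:ℝ)^(2:ℕ) * (C * (n:ℝ)^(2:ℕ) * B))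
        = 2 * C * (n:ℝ)^(6:ℕ) * B := by ring
    calc (L : ℝ) * ((L + 1) * ((n * m) * B))
        ≤ ((n:ℝ)^(2:ℕ)) * ((L + 1) * ((n * m) * B)) := by
          refine mul_le_mul_of_nonneg_right hA1 ?_
          positivity
      _ ≤ ((n:ℝ)^(2:ℕ)) * ((2 * (n:ℝ)^(2:ℕ)) * ((n * m) * B)) := by
          refine mul_le_mul_of_nonneg_left ?_ (by positivity)
          refine mul_le_mul_of_nonneg_right hA2 (by positivity)
      _ ≤ ((n:ℝ)^(2:ℕ)) * ((2 * (n:ℝ)^(2:ℕ)) * ((C * (n:ℝ)^(2:ℕ)) * B)) := by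
          refine mul_le_mul_of_nonneg_left ?_ (by positivity)
          refine mul_le_mul_of_nonneg_left ?_ (by positivity)
          exact mul_le_mul_of_nonneg_right hA3 hB0
      _ = 2 * C * (n:ℝ)^(6:ℕ) * B := by ring
  refine hchain.trans ?_
  -- 2 C n^6 exp(-M) ≤ exp(-T)
  set T : ℝ := (n:ℝ) ^ (ε/2) with hTdef
  have hT0 : (0:ℝ) < T := Real.rpow_pos_of_pos hnpos _
  set M : ℝ := Dr^2 / (16 * L) with hMdef
  have hM' : (n:ℝ) ^ ((3:ℝ)*ε/2) / 256 ≤ M := by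
    have hDr2 : Dr^2 = (n:ℝ) ^ ((4:ℝ)/3 + ε/2) / 16 := by
      rw [hDrdef, div_pow, pow_two, ← Real.rpow_add hnpos,
        show (2:ℝ)/3 + ε/4 + ((2:ℝ)/3 + ε/4) = (4:ℝ)/3 + ε/2 from by ring]
      norm_num
    have hsplit2 : (n:ℝ) ^ ((3:ℝ)*ε/2) * Λ = (n:ℝ) ^ ((4:ℝ)/3 + ε/2) := by
      rw [hΛdef, ← Real.rpow_add hnpos]
      congr 1
      ring
    rw [hMdef, hDr2]
    rw [div_div]
    have h16L : (0:ℝ) < 16 * L := by positivity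
    have h16Λ : (0:ℝ) < 16 * Λ := by positivity
    calc (n:ℝ) ^ ((3:ℝ)*ε/2) / 256
        = (n:ℝ) ^ ((3:ℝ)*ε/2) * Λ / (256 * Λ) := by
          rw [mul_comm (256:ℝ) Λ, mul_comm ((n:ℝ) ^ ((3:ℝ)*ε/2)) Λ,
            mul_div_mul_left _ _ hΛ0.ne']
      _ = (n:ℝ) ^ ((4:ℝ)/3 + ε/2) / (16 * (16 * Λ)) := by
          rw [hsplit2]; ring_nf
      _ ≤ (n:ℝ) ^ ((4:ℝ)/3 + ε/2) / (16 * (16 * L)) := by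
          refine div_le_div_of_nonneg_left (by positivity) (by positivity) ?_
          have : (16:ℝ) * L ≤ 16 * Λ := by linarith
          linarith
  have h2T : T + T ≤ M := by
    have hPe : (512:ℝ) * T ≤ (n:ℝ) ^ ((3:ℝ)*ε/2) := by
      have : (n:ℝ)^ε * (n:ℝ)^(ε/2) = (n:ℝ) ^ ((3:ℝ)*ε/2) := by
        rw [← Real.rpow_add hnpos]; congr 1; ring
      rw [hTdef, ← this]
      exact mul_le_mul_of_nonneg_right h512 (Real.rpow_nonneg hnpos.le _)
    have : 2 * T ≤ (n:ℝ) ^ ((3:ℝ)*ε/2) / 256 := by linarith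
    linarith [hM']
  have hlogT : Real.log (2 * C * (n:ℝ)^(6:ℕ)) ≤ T := by
    have h2C0 : (0:ℝ) < 2*C := by linarith
    have hn60 : (0:ℝ) < (n:ℝ)^(6:ℕ) := by positivity
    rw [Real.log_mul (by linarith) (by positivity), Real.log_pow]
    rw [hTdef]
    push_cast
    linarith [hlog]
  have hpos2Cn : (0:ℝ) < 2 * C * (n:ℝ)^(6:ℕ) := by positivity
  calc 2 * C * (n:ℝ)^(6:ℕ) * B
      = Real.exp (Real.log (2 * C * (n:ℝ)^(6:ℕ)) + (-(Dr^2) / (16 * L))) := by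
        rw [Real.exp_add, Real.exp_log hpos2Cn, hBdef]
    _ ≤ Real.exp (-(1:ℝ) * T) := by
        apply Real.exp_le_exp.2
        have : -(Dr^2) / (16 * L) = -M := by rw [hMdef]; ring
        rw [this]
        linarith
    _ = Real.exp (-(1:ℝ) * (n:ℝ)^(ε/2)) := by rw [hTdef]

end Main


/-- In the irrational regime, if `q_j ≤ n^{1/3-ε/2} < q_{j+1}`, `a_j < n^{ε/2}` and
`a_{j+1} ≤ n^{ε/4}`, the probability of a cycle of length at most `n^{4/3-ε}` is at
most `exp(-c n^{ε/2})`. -/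
theorem irrational_regime_no_short_cycles (C : ℝ) (hC : 1 < C) (ε : ℝ) (hε : 0 < ε) :
    ∃ c > 0, ∃ n₀ : ℕ, ∀ n : ℕ, n₀ ≤ n → ∀ m : ℕ, n < m → (m : ℝ) < C * n →
      ∀ j : ℕ, ∀ a a' : ℕ, ∀ pq pq' : ℕ × ℕ,
        (cfQuots n m)[j]? = some a →
        (cfQuots n m)[j + 1]? = some a' →
        (convergents n m)[j]? = some pq →
        (convergents n m)[j + 1]? = some pq' →
        (pq.2 : ℝ) ≤ (n : ℝ) ^ ((1 : ℝ) / 3 - ε / 2) →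
        (n : ℝ) ^ ((1 : ℝ) / 3 - ε / 2) < (pq'.2 : ℝ) →
        (a : ℝ) < (n : ℝ) ^ (ε / 2) →
        (a' : ℝ) ≤ (n : ℝ) ^ (ε / 4) →
        prob (n := n) (m := m)
            (fun ω => ∃ Cy ∈ cycles ω, (Cy.ncard : ℝ) ≤ (n : ℝ) ^ ((4 : ℝ) / 3 - ε)) ≤
          Real.exp (-c * (n : ℝ) ^ (ε / 2)) := by
  exact irrational_regime_no_short_cycles' C hC ε hε
end
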